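/- arXiv:2107.05690 — 5 statements merged into one kernel-verified Lean document; each statement's English description precedes it below -/
import Mathlib

section
/- For every tollbooth instance on a cycle graph, there exists an item pricing p such that for every arrival order σ there is a tie-breaking choice t with Wel(p,σ,t) ≥ OPT/2. (The competitive ratio of item pricing with seller tie-breaking power on cycles is at most 2.) -/
open scoped Classical NNReal ENNReal

noncomputable section

namespace Tollbooth

variable {V : Type*} [Fintype V] [DecidableEq V]

/-- Total price (in `ℝ≥0∞`) of a set of edges under an item pricing `p`. -/
def price (p : Sym2 V → ℝ≥0∞) (s : Finset (Sym2 V)) : ℝ≥0∞ := ∑ e ∈ s, p e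

/-- One step of the selling process: the state consists of the set of available edges together
with the set of buyers that have purchased so far; buyer `j` purchases exactly when all the
edges of her demand path are available and either the price is strictly below her value, or the
price equals her value and her tie-breaking bit `t j` is `true`. -/
def step {n : ℕ} (p : Sym2 V → ℝ≥0∞) (Q : Fin n → Finset (Sym2 V)) (v : Fin n → ℝ≥0)
    (t : Fin n → Bool) (st : Finset (Sym2 V) × Finset (Fin n)) (j : Fin n) :
    Finset (Sym2 V) × Finset (Fin n) :=
  if Q j ⊆ st.1 ∧
      (price p (Q j) < (v j : ℝ≥0∞) ∨ (price p (Q j) = (v j : ℝ≥0∞) ∧ t j = true)) then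
    (st.1 \ Q j, insert j st.2)
  else st

/-- The set of buyers who purchase, when buyers arrive in the order `σ 0, σ 1, …`,
starting from all edges of `G` being available. -/
def purchased {n : ℕ} (G : SimpleGraph V) (p : Sym2 V → ℝ≥0∞) (Q : Fin n → Finset (Sym2 V))
    (v : Fin n → ℝ≥0) (σ : Equiv.Perm (Fin n)) (t : Fin n → Bool) : Finset (Fin n) :=
  ((List.ofFn fun i => σ i).foldl (step p Q v t) (G.edgeFinset, ∅)).2

/-- The welfare obtained by the item pricing `p` under arrival order `σ` and
tie-breaking choice `t`. -/
def Wel {n : ℕ} (G : SimpleGraph V) (p : Sym2 V → ℝ≥0∞) (Q : Fin n → Finset (Sym2 V))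
    (v : Fin n → ℝ≥0) (σ : Equiv.Perm (Fin n)) (t : Fin n → Bool) : ℝ≥0 :=
  ∑ j ∈ purchased G p Q v σ t, v j

/-- The hindsight optimal welfare: the maximum total value of a set of buyers whose demand
paths are pairwise edge-disjoint. -/
def OPT {n : ℕ} (Q : Fin n → Finset (Sym2 V)) (v : Fin n → ℝ≥0) : ℝ≥0 :=
  (Finset.univ.powerset.filter fun S : Finset (Fin n) =>
      (S : Set (Fin n)).Pairwise fun j k => Disjoint (Q j) (Q k)).sup
    fun S => ∑ j ∈ S, v j

/-- `s` is the (nonempty) edge set of a path of `G`. -/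
def IsPathEdges (G : SimpleGraph V) (s : Finset (Sym2 V)) : Prop :=
  ∃ (a b : V) (W : G.Walk a b), W.IsPath ∧ W.edges ≠ [] ∧ s = W.edges.toFinset

/-- A tollbooth instance on `G`: at least one buyer, every buyer has positive value and
demands (the edge set of) a path of `G`. -/
def Instance {n : ℕ} (G : SimpleGraph V) (Q : Fin n → Finset (Sym2 V)) (v : Fin n → ℝ≥0) :
    Prop :=
  1 ≤ n ∧ ∀ j, 0 < v j ∧ IsPathEdges G (Q j)

/-- A star: a tree all of whose edges share a common vertex. -/
def IsStar (G : SimpleGraph V) : Prop := G.IsTree ∧ ∃ c : V, ∀ e ∈ G.edgeSet, c ∈ e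

/-- A spider: a tree with at most one vertex of degree at least `3`. -/
def IsSpider (G : SimpleGraph V) : Prop :=
  G.IsTree ∧ {w : V | 3 ≤ G.degree w}.Subsingleton

/-- A cycle graph: a connected graph in which every vertex has degree exactly `2`. -/
def IsCycleGraph (G : SimpleGraph V) : Prop := G.Connected ∧ ∀ w : V, G.degree w = 2

/-- A path graph: a tree in which every vertex has degree at most `2`. -/
def IsPathGraph (G : SimpleGraph V) : Prop := G.IsTree ∧ ∀ w : V, G.degree w ≤ 2

end Tollbooth




namespace TollAux

open Finset SimpleGraph

variable {V : Type*} [Fintype V] [DecidableEq V] (G : SimpleGraph V)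

/-- the unique neighbor of `c` other than `p`. -/
def nxt (p c : V) : V :=
  if h : ((G.neighborFinset c).erase p).Nonempty then h.choose else p

variable {G}

lemma nxt_spec (hdeg : ∀ w : V, G.degree w = 2) {p c : V} (h : G.Adj c p) :
    G.Adj c (nxt G p c) ∧ nxt G p c ≠ p := by
  have hp : p ∈ G.neighborFinset c := by simpa using h
  have hcard : ((G.neighborFinset c).erase p).card = 1 := by
    rw [Finset.card_erase_of_mem hp]
    have : (G.neighborFinset c).card = 2 := hdeg c
    omega
  have hne : ((G.neighborFinset c).erase p).Nonempty := by
    rw [← Finset.card_pos, hcard]; norm_num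
  have hmem := hne.choose_spec
  rw [Finset.mem_erase, mem_neighborFinset] at hmem
  rw [nxt, dif_pos hne]
  exact ⟨hmem.2, hmem.1⟩

lemma nxt_eq (hdeg : ∀ w : V, G.degree w = 2) {p c q : V} (hp : G.Adj c p) (hq : G.Adj c q)
    (hne : q ≠ p) : nxt G p c = q := by
  have hp' : p ∈ G.neighborFinset c := by simpa using hp
  have hq' : q ∈ (G.neighborFinset c).erase p := by
    rw [Finset.mem_erase, mem_neighborFinset]; exact ⟨hne, hq⟩
  have hcard : ((G.neighborFinset c).erase p).card = 1 := by
    rw [Finset.card_erase_of_mem hp']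
    have : (G.neighborFinset c).card = 2 := hdeg c
    omega
  have hne' : ((G.neighborFinset c).erase p).Nonempty := ⟨q, hq'⟩
  have hmem := hne'.choose_spec
  rw [nxt, dif_pos hne']
  exact Finset.card_le_one.mp (le_of_eq hcard) _ hmem _ hq'

theorem cycle_coords (hconn : G.Connected) (hdeg : ∀ w : V, G.degree w = 2) :
    ∃ N : ℕ, 3 ≤ N ∧ ∃ x : ZMod N → V, Function.Bijective x ∧
      ∀ i j : ZMod N, G.Adj (x i) (x j) ↔ j = i + 1 ∨ i = j + 1 := by
  classical
  obtain ⟨u0⟩ := hconn.nonempty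
  have hnb : (G.neighborFinset u0).Nonempty := by
    rw [← Finset.card_pos]
    have : (G.neighborFinset u0).card = 2 := hdeg u0
    omega
  obtain ⟨u1, hu1⟩ := hnb
  rw [mem_neighborFinset] at hu1
  -- the trajectory
  set S : ℕ → V × V := fun k =>
    Nat.rec (u0, u1) (fun _ pr => (pr.2, nxt G pr.1 pr.2)) k with hS
  have hSsucc : ∀ k, S (k + 1) = ((S k).2, nxt G (S k).1 (S k).2) := fun k => rfl
  have adjS : ∀ k, G.Adj (S k).1 (S k).2 := by
    intro k
    induction k with
    | zero => exact hu1
    | succ k ih => exact (nxt_spec hdeg ih.symm).1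
  set x : ℕ → V := fun k => (S k).1 with hx
  have hSxx : ∀ k, S k = (x k, x (k + 1)) := fun k => rfl
  have adjx : ∀ k, G.Adj (x k) (x (k + 1)) := fun k => adjS k
  have xrec : ∀ k, x (k + 2) = nxt G (x k) (x (k + 1)) := fun k => rfl
  have ne2x : ∀ k, x (k + 2) ≠ x k := by
    intro k
    rw [xrec k]
    exact (nxt_spec hdeg (adjx k).symm).2
  have xback : ∀ k, nxt G (x (k + 2)) (x (k + 1)) = x k := by
    intro k
    exact nxt_eq hdeg (adjx (k + 1)) (adjx k).symm (ne2x k).symm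
  have Sinj1 : ∀ k l, S (k + 1) = S (l + 1) → S k = S l := by
    intro k l h
    have h1 : x (k + 1) = x (l + 1) := congrArg Prod.fst h
    have h2 : x (k + 2) = x (l + 2) := congrArg Prod.snd h
    have h0 : x k = x l := by
      rw [← xback k, ← xback l, h1, h2]
    rw [hSxx k, hSxx l, h0, h1]
  have Scancel : ∀ m k l, S (k + m) = S (l + m) → S k = S l := by
    intro m
    induction m with
    | zero => intro k l h; simpa using h
    | succ m ih =>
      intro k l h
      refine ih k l (Sinj1 _ _ ?_)
      have e1 : k + (m + 1) = k + m + 1 := by omega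
      have e2 : l + (m + 1) = l + m + 1 := by omega
      rw [e1, e2] at h
      exact h
  have hrep : ∃ m, 0 < m ∧ S m = S 0 := by
    obtain ⟨k, l, hne, hkl⟩ := Finite.exists_ne_map_eq_of_infinite S
    rcases Nat.lt_or_ge k l with h | h
    · refine ⟨l - k, by omega, ?_⟩
      refine Scancel k (l - k) 0 ?_
      have e : l - k + k = l := by omega
      rw [e, Nat.zero_add]
      exact hkl.symm
    · have h' : l < k := by omega
      refine ⟨k - l, by omega, ?_⟩
      refine Scancel l (k - l) 0 ?_
      have e : k - l + l = k := by omega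
      rw [e, Nat.zero_add]
      exact hkl
  set N := Nat.find hrep with hNdef
  obtain ⟨hNpos, hSN⟩ : 0 < N ∧ S N = S 0 := Nat.find_spec hrep
  have hNmin : ∀ m, 0 < m → m < N → S m ≠ S 0 := by
    intro m hm hmN hc
    exact Nat.find_min hrep hmN ⟨hm, hc⟩
  have Sper : ∀ k, S (k + N) = S k := by
    intro k
    induction k with
    | zero => simpa using hSN
    | succ k ih =>
      have e : k + 1 + N = (k + N) + 1 := by omega
      rw [e, hSsucc (k + N), ih, hSsucc k]
  have xper : ∀ k, x (k + N) = x k := by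
    intro k
    show (S (k + N)).1 = (S k).1
    rw [Sper k]
  have xperm : ∀ k m, x (k + N * m) = x k := by
    intro k m
    induction m with
    | zero => simp
    | succ m ih =>
      have e : k + N * (m + 1) = (k + N * m) + N := by ring
      rw [e, xper, ih]
  have xmod : ∀ k, x (k % N) = x k := by
    intro k
    conv_rhs => rw [← Nat.mod_add_div k N]
    exact (xperm _ _).symm
  -- neighborhoods
  have nbhd : ∀ k, G.neighborFinset (x (k + 1)) = {x k, x (k + 2)} := by
    intro k
    refine (Finset.eq_of_subset_of_card_le ?_ ?_).symm
    · intro w hw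
      rw [Finset.mem_insert, Finset.mem_singleton] at hw
      rw [mem_neighborFinset]
      rcases hw with h | h
      · rw [h]; exact (adjx k).symm
      · rw [h]; exact adjx (k + 1)
    · have h2 : (G.neighborFinset (x (k + 1))).card = 2 := hdeg _
      rw [h2, Finset.card_insert_of_notMem, Finset.card_singleton]
      rw [Finset.mem_singleton]
      exact fun h => (ne2x k) h.symm
  have nbhd' : ∀ m, 1 ≤ m → G.neighborFinset (x m) = {x (m - 1), x (m + 1)} := by
    intro m hm
    obtain ⟨k, rfl⟩ : ∃ k, m = k + 1 := ⟨m - 1, by omega⟩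
    have e1 : k + 1 - 1 = k := by omega
    rw [e1]
    exact nbhd k
  -- distinctness below N
  have distinct : ∀ i j, i < j → j < N → x i ≠ x j := by
    intro i j hij hjN hc
    set a := i + 2 * N with ha
    set b := j + 2 * N with hb
    have hxa : x a = x i := by rw [ha, two_mul, ← Nat.add_assoc]; rw [xper, xper]
    have hxb : x b = x j := by rw [hb, two_mul, ← Nat.add_assoc]; rw [xper, xper]
    have hab : x a = x b := by rw [hxa, hxb, hc]
    have hnbhd_a : G.neighborFinset (x a) = {x (a - 1), x (a + 1)} := nbhd' a (by omega)
    have hnbhd_b : G.neighborFinset (x b) = {x (b - 1), x (b + 1)} := nbhd' b (by omega)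
    have hseteq : ({x (a - 1), x (a + 1)} : Finset V) = {x (b - 1), x (b + 1)} := by
      rw [← hnbhd_a, ← hnbhd_b, hab]
    have hne_a : x (a + 1) ≠ x (a - 1) := by
      have e : a + 1 = (a - 1) + 2 := by omega
      rw [e]
      exact ne2x (a - 1)
    have hmem : x (a + 1) ∈ ({x (b - 1), x (b + 1)} : Finset V) := by
      rw [← hseteq]
      simp
    rw [Finset.mem_insert, Finset.mem_singleton] at hmem
    -- d
    set d := j - i with hd
    have hd1 : 1 ≤ d := by omega
    have hdN : d < N := by omega
    have hba : b = a + d := by omega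
    rcases hmem with hcase | hcase
    · -- mirror case : x (a+1) = x (b-1), derive x (a-1) = x (b+1)
      have hmem2 : x (a - 1) ∈ ({x (b - 1), x (b + 1)} : Finset V) := by
        rw [← hseteq]; simp
      rw [Finset.mem_insert, Finset.mem_singleton] at hmem2
      have hcase2 : x (a - 1) = x (b + 1) := by
        rcases hmem2 with h | h
        · exfalso; exact hne_a (hcase.trans h.symm)
        · exact h
      -- mirror lemma
      have mirror : ∀ t, t + 1 ≤ a → x (b + t) = x (a - t) ∧ x (b + t + 1) = x (a - t - 1) := by
        intro t
        induction t with
        | zero =>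
          intro _
          constructor
          · simpa using hab.symm
          · have e : a - 0 - 1 = a - 1 := by omega
            have e2 : b + 0 + 1 = b + 1 := by omega
            rw [e, e2]
            exact hcase2.symm
        | succ t ih =>
          intro hta
          have hta' : t + 1 ≤ a := by omega
          obtain ⟨ih1, ih2⟩ := ih hta'
          constructor
          · have e : b + (t + 1) = b + t + 1 := by omega
            have e2 : a - (t + 1) = a - t - 1 := by omega
            rw [e, e2]
            exact ih2
          · have e : b + (t + 1) + 1 = (b + t) + 2 := by omega
            rw [e]
            have hrec : x ((b + t) + 2) = nxt G (x (b + t)) (x (b + t + 1)) := xrec _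
            rw [hrec, ih1, ih2]
            have e3 : a - (t + 1) - 1 = a - t - 2 := by omega
            rw [e3]
            -- nxt G (x (a-t)) (x (a-t-1)) = x (a-t-2)
            refine nxt_eq hdeg ?_ ?_ ?_
            · have e4 : a - t = (a - t - 1) + 1 := by omega
              rw [e4]
              exact adjx (a - t - 1)
            · have e5 : a - t - 1 = (a - t - 2) + 1 := by omega
              rw [e5]
              exact (adjx (a - t - 2)).symm
            · have e6 : a - t = (a - t - 2) + 2 := by omega
              rw [e6]
              exact (ne2x (a - t - 2)).symm
      -- derive contradiction by parity
      rcases Nat.even_or_odd d with hpar | hpar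
      · -- even: choose t with d + 2t = 2N+2
        obtain ⟨c2, hc2⟩ := hpar
        set t := N + 1 - c2 with ht
        have h2t : d + 2 * t = 2 * N + 2 := by omega
        have hta : t + 1 ≤ a := by omega
        have hmain := (mirror t hta).1
        have e : b + t = (a - t) + 2 + 2 * N := by omega
        rw [e] at hmain
        have e2 : (a - t) + 2 + 2 * N = ((a - t) + 2) + N * 2 := by ring
        rw [e2, xperm] at hmain
        exact (ne2x (a - t)) hmain
      · -- odd: choose t with d + 2t = 2N+1
        obtain ⟨c2, hc2⟩ := hpar
        set t := N - c2 with ht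
        have h2t : d + 2 * t = 2 * N + 1 := by omega
        have hta : t + 1 ≤ a := by omega
        have hmain := (mirror t hta).1
        have e : b + t = ((a - t) + 1) + N * 2 := by omega
        rw [e, xperm] at hmain
        exact (G.irrefl (hmain ▸ adjx (a - t)))
    · -- case x(a+1) = x(b+1) : period smaller than N
      have hpair : S a = S b := by
        rw [hSxx a, hSxx b, hab, hcase]
      have : S 0 = S d := by
        refine Scancel a 0 d ?_
        have e : d + a = b := by omega
        rw [Nat.zero_add, e]
        exact hpair
      exact hNmin d (by omega) hdN this.symm
  -- every vertex is some x k
  have closure : ∀ w z : V, G.Adj w z → (∃ k, x k = w) → ∃ k, x k = z := by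
    rintro w z hadj ⟨k, rfl⟩
    have hk : x k = x (k + N) := (xper k).symm
    have hmem : z ∈ G.neighborFinset (x (k + N)) := by
      rw [mem_neighborFinset, ← hk]
      exact hadj
    rw [nbhd' (k + N) (by omega), Finset.mem_insert, Finset.mem_singleton] at hmem
    rcases hmem with h | h
    · exact ⟨k + N - 1, h.symm⟩
    · exact ⟨k + N + 1, h.symm⟩
  have surj : ∀ z : V, ∃ k, x k = z := by
    have walkind : ∀ (w z : V) (_ : G.Walk w z), (∃ k, x k = w) → ∃ k, x k = z := by
      intro w z W
      induction W with
      | nil => exact id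
      | cons h _ ih => exact fun hw => ih (closure _ _ h hw)
    intro z
    exact walkind u0 z ((hconn.preconnected u0 z).some) ⟨0, rfl⟩
  -- N ≥ 3
  have hN3 : 3 ≤ N := by
    by_contra hlt
    push_neg at hlt
    have h12 : N = 1 ∨ N = 2 := by omega
    rcases h12 with h1 | h2
    · have h10 : x 1 = x 0 := by
        have := xper 0
        rw [h1] at this
        simpa using this
      exact G.irrefl (h10 ▸ adjx 0)
    · have h20 : x 2 = x 0 := by
        have := xper 0
        rw [h2] at this
        simpa using this
      exact (ne2x 0) h20
  haveI : NeZero N := ⟨by omega⟩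
  refine ⟨N, hN3, fun i => x i.val, ?_, ?_⟩
  · constructor
    · intro i j hij
      by_contra hne
      have hvi : i.val < N := i.val_lt
      have hvj : j.val < N := j.val_lt
      have hvne : i.val ≠ j.val := fun h => hne (ZMod.val_injective N h)
      rcases Nat.lt_or_ge i.val j.val with h | h
      · exact distinct _ _ h hvj hij
      · exact distinct _ _ (by omega) hvi hij.symm
    · intro z
      obtain ⟨k, hk⟩ := surj z
      refine ⟨(k : ZMod N), ?_⟩
      show x ((k : ZMod N)).val = z
      rw [ZMod.val_natCast, xmod]
      exact hk
  · -- adjacency characterization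
    haveI : Fact (1 < N) := ⟨by omega⟩
    have xcast : ∀ k l : ℕ, x k = x l → (k : ZMod N) = (l : ZMod N) := by
      intro k l h
      have hk : x (k % N) = x (l % N) := by rw [xmod, xmod, h]
      have hmod : k % N = l % N := by
        by_contra hne
        rcases Nat.lt_or_ge (k % N) (l % N) with hlt | hge
        · exact distinct _ _ hlt (Nat.mod_lt _ hNpos) hk
        · exact distinct _ _ (by omega) (Nat.mod_lt _ hNpos) hk.symm
      rw [ZMod.natCast_eq_natCast_iff']
      exact hmod
    have adjchar : ∀ i : ZMod N, G.Adj (x i.val) (x (i + 1).val) := by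
      intro i
      have hval : (i + 1).val = (i.val + 1) % N := by
        rw [ZMod.val_add, ZMod.val_one]
      have : x ((i + 1).val) = x (i.val + 1) := by
        rw [hval, xmod]
      rw [this]
      exact adjx i.val
    intro i j
    constructor
    · intro hadj
      have hadj' : G.Adj (x i.val) (x j.val) := hadj
      have hmem : x j.val ∈ G.neighborFinset (x (i.val + N)) := by
        rw [xper, mem_neighborFinset]
        exact hadj'
      rw [nbhd' (i.val + N) (by omega), Finset.mem_insert, Finset.mem_singleton] at hmem
      rcases hmem with h | h
      · right
        have hc := xcast j.val (i.val + N - 1) h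
        have e : i.val + N - 1 = i.val + (N - 1) := by omega
        rw [e] at hc
        push_cast [Nat.cast_sub (by omega : 1 ≤ N), ZMod.natCast_self] at hc
        rw [ZMod.natCast_rightInverse j, ZMod.natCast_rightInverse i] at hc
        rw [hc]; ring
      · left
        have hc := xcast j.val (i.val + N + 1) h
        push_cast [ZMod.natCast_self] at hc
        rw [ZMod.natCast_rightInverse j, ZMod.natCast_rightInverse i] at hc
        rw [hc]; ring
    · intro hor
      rcases hor with h | h
      · rw [h]
        exact adjchar i
      · rw [h]
        exact (adjchar j).symm

end TollAux



namespace TollAux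

open Finset SimpleGraph

lemma mem_edges_iff {V : Type*} {G : SimpleGraph V} {a b : V} (W : G.Walk a b) (e : Sym2 V) :
    e ∈ W.edges ↔ ∃ t, t < W.length ∧ e = s(W.getVert t, W.getVert (t + 1)) := by
  induction W with
  | nil => simp [Walk.edges_nil]
  | @cons u v w h p ih =>
    rw [Walk.edges_cons, List.mem_cons, ih]
    constructor
    · rintro (rfl | ⟨t, ht, rfl⟩)
      · refine ⟨0, by simp [Walk.length_cons], ?_⟩
        rw [Walk.getVert_zero]
        rw [show (0 + 1 : ℕ) = 0 + 1 from rfl, Walk.getVert_cons_succ, Walk.getVert_zero]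
      · refine ⟨t + 1, by rw [Walk.length_cons]; omega, ?_⟩
        rw [Walk.getVert_cons_succ, Walk.getVert_cons_succ]
    · rintro ⟨t, ht, rfl⟩
      cases t with
      | zero =>
        left
        rw [Walk.getVert_zero, show (0 + 1 : ℕ) = 0 + 1 from rfl, Walk.getVert_cons_succ,
          Walk.getVert_zero]
      | succ s =>
        right
        refine ⟨s, by rw [Walk.length_cons] at ht; omega, ?_⟩
        rw [Walk.getVert_cons_succ, Walk.getVert_cons_succ]

lemma walk_coord {V : Type*} {G : SimpleGraph V} {N : ℕ} (hN3 : 3 ≤ N)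
    (g : V → ZMod N) (ginj : Function.Injective g)
    (hA : ∀ u w : V, G.Adj u w → g w = g u + 1 ∨ g u = g w + 1)
    {a b : V} (W : G.Walk a b) (hW : W.IsPath) :
    ∃ δ : ZMod N, (δ = 1 ∨ δ = -1) ∧
      ∀ t, t ≤ W.length → g (W.getVert t) = g a + (t : ZMod N) * δ := by
  haveI : NeZero N := ⟨by omega⟩
  induction W with
  | nil =>
    refine ⟨1, Or.inl rfl, ?_⟩
    intro t ht
    rw [Walk.length_nil] at ht
    have : t = 0 := by omega
    subst this
    simp
  | @cons u v w h p ih =>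
    obtain ⟨δp, hδp, hcoord⟩ := ih hW.of_cons
    obtain ⟨δ0, hδ0, hv⟩ : ∃ δ0 : ZMod N, (δ0 = 1 ∨ δ0 = -1) ∧ g v = g u + δ0 := by
      rcases hA _ _ h with h1 | h1
      · exact ⟨1, Or.inl rfl, h1⟩
      · exact ⟨-1, Or.inr rfl, by rw [h1]; ring⟩
    by_cases hlen : p.length = 0
    · refine ⟨δ0, hδ0, ?_⟩
      intro t ht
      rw [Walk.length_cons, hlen] at ht
      interval_cases t
      · simp
      · rw [show (1 : ℕ) = 0 + 1 from rfl, Walk.getVert_cons_succ, Walk.getVert_zero]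
        rw [hv]
        push_cast
        ring
    · have hδeq : δp = δ0 := by
        by_contra hne
        have hd : δp = -δ0 := by
          rcases hδp with rfl | rfl <;> rcases hδ0 with rfl | rfl
          · exact absurd rfl hne
          · ring
          · ring
          · exact absurd rfl hne
        have h1 : g (p.getVert 1) = g v + δp := by
          have := hcoord 1 (by omega)
          simpa using this
        have h2 : g (p.getVert 1) = g u := by
          rw [h1, hd, hv]; ring
        have h3 : p.getVert 1 = u := ginj h2
        have hmem : u ∈ p.support := by
          rw [Walk.mem_support_iff_exists_getVert]
          exact ⟨1, h3, by omega⟩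
        exact ((SimpleGraph.Walk.cons_isPath_iff h p).mp hW).2 hmem
      refine ⟨δ0, hδ0, ?_⟩
      intro t ht
      cases t with
      | zero => simp
      | succ s =>
        have hs : s ≤ p.length := by
          rw [Walk.length_cons] at ht; omega
        rw [Walk.getVert_cons_succ, hcoord s hs, hδeq, hv]
        push_cast
        ring

end TollAux



namespace TollAux2

open Finset SimpleGraph

variable {V : Type*} [DecidableEq V] {G : SimpleGraph V} {N : ℕ}

lemma neg_one_eq (hN3 : 3 ≤ N) : ((N - 1 : ℕ) : ZMod N) = -1 := by
  haveI : NeZero N := ⟨by omega⟩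
  push_cast [Nat.cast_sub (by omega : 1 ≤ N), ZMod.natCast_self]
  ring

lemma two_ne_zero' (hN3 : 3 ≤ N) : (2 : ZMod N) ≠ 0 := by
  haveI : NeZero N := ⟨by omega⟩
  intro h
  have h2 : ((2 : ℕ) : ZMod N) = 0 := by push_cast; exact h
  rw [ZMod.natCast_eq_zero_iff] at h2
  have := Nat.le_of_dvd (by norm_num) h2
  omega

lemma edge_inj (hN3 : 3 ≤ N) {x : ZMod N → V} (hinj : Function.Injective x)
    {w w' : ZMod N} (h : s(x w, x (w + 1)) = s(x w', x (w' + 1))) : w = w' := by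
  rw [Sym2.eq_iff] at h
  rcases h with ⟨h1, _⟩ | ⟨h1, h2⟩
  · exact hinj h1
  · have e1 : w = w' + 1 := hinj h1
    have e2 : w + 1 = w' := hinj h2
    exfalso
    apply two_ne_zero' hN3
    have : w = w + 2 := by
      conv_lhs => rw [e1, ← e2]
      ring
    linear_combination this.symm

lemma edge_form (hN3 : 3 ≤ N) {x : ZMod N → V} (hbij : Function.Bijective x)
    (hadj : ∀ i j : ZMod N, G.Adj (x i) (x j) ↔ j = i + 1 ∨ i = j + 1)
    {e : Sym2 V} (he : e ∈ G.edgeSet) : ∃ w : ZMod N, e = s(x w, x (w + 1)) := by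
  induction e with
  | _ u v =>
    rw [SimpleGraph.mem_edgeSet] at he
    obtain ⟨i, rfl⟩ := hbij.surjective u
    obtain ⟨j, rfl⟩ := hbij.surjective v
    rcases (hadj i j).mp he with h | h
    · exact ⟨i, by rw [h]⟩
    · refine ⟨j, ?_⟩
      rw [h, Sym2.eq_swap]

lemma run_val (hN3 : 3 ≤ N) {m : ZMod N} {L : ℕ}
    (hne : ∀ s : ℕ, s < L → m + (s : ZMod N) ≠ -1) :
    ∀ s, s < L → (m + (s : ZMod N)).val = m.val + s := by
  haveI : NeZero N := ⟨by omega⟩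
  haveI : Fact (1 < N) := ⟨by omega⟩
  intro s
  induction s with
  | zero => intro _; simp
  | succ s ih =>
    intro hs
    have hsL : s < L := by omega
    have ihv := ih hsL
    have hm : m + (s : ZMod N) ≠ -1 := hne s hsL
    have hvlt : (m + (s : ZMod N)).val < N := ZMod.val_lt _
    have hvne : (m + (s : ZMod N)).val ≠ N - 1 := by
      intro hc
      apply hm
      rw [← ZMod.natCast_rightInverse (m + (s : ZMod N)), hc, neg_one_eq hN3]
    have hstep : m + ((s + 1 : ℕ) : ZMod N) = (m + (s : ZMod N)) + 1 := by
      push_cast; ring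
    rw [hstep, ZMod.val_add, ZMod.val_one, ihv]
    have : m.val + s + 1 < N := by omega
    rw [Nat.mod_eq_of_lt this]
    omega

lemma image_run (hN3 : 3 ≤ N) {m : ZMod N} {L : ℕ} (hL : 1 ≤ L)
    (hne : ∀ s : ℕ, s < L → m + (s : ZMod N) ≠ -1) :
    (Finset.range L).image (fun s : ℕ => (m + (s : ZMod N)).val) =
      Finset.Icc m.val (m.val + L - 1) := by
  ext i
  simp only [Finset.mem_image, Finset.mem_range, Finset.mem_Icc]
  constructor
  · rintro ⟨s, hs, rfl⟩
    rw [run_val hN3 hne s hs]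
    omega
  · rintro ⟨h1, h2⟩
    refine ⟨i - m.val, by omega, ?_⟩
    rw [run_val hN3 hne _ (by omega)]
    omega

lemma path_interval (hN3 : 3 ≤ N) (x : ZMod N → V) (hbij : Function.Bijective x)
    (hadj : ∀ i j : ZMod N, G.Adj (x i) (x j) ↔ j = i + 1 ∨ i = j + 1)
    (ρ : Sym2 V → ℕ) (hρ : ∀ w : ZMod N, ρ s(x w, x (w + 1)) = w.val)
    {a b : V} (W : G.Walk a b) (hW : W.IsPath) (hlen : W.length ≠ 0)
    (he0 : s(x (-1), x (-1 + 1)) ∉ W.edges) :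
    ∃ A B : ℕ, A ≤ B ∧ W.edges.toFinset.image ρ = Finset.Icc A B := by
  haveI : NeZero N := ⟨by omega⟩
  set X : ZMod N ≃ V := Equiv.ofBijective x hbij with hX
  set g : V → ZMod N := fun u => X.symm u with hg
  have hxg : ∀ u : V, x (g u) = u := fun u => X.apply_symm_apply u
  have ginj : Function.Injective g := X.symm.injective
  have hA : ∀ u w : V, G.Adj u w → g w = g u + 1 ∨ g u = g w + 1 := by
    intro u w h
    have h' : G.Adj (x (g u)) (x (g w)) := by rw [hxg, hxg]; exact h
    exact (hadj _ _).mp h'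
  obtain ⟨δ, hδ, hco⟩ := TollAux.walk_coord hN3 g ginj hA W hW
  set L := W.length with hL
  have hgv : ∀ t, t ≤ L → W.getVert t = x (g a + (t : ZMod N) * δ) := by
    intro t ht
    have := congrArg x (hco t ht)
    rw [hxg] at this
    exact this
  rcases hδ with rfl | rfl
  · -- δ = 1
    have hedge : ∀ t, t < L →
        s(W.getVert t, W.getVert (t + 1)) = s(x (g a + (t:ZMod N)), x (g a + (t:ZMod N) + 1)) := by
      intro t ht
      rw [hgv t (le_of_lt ht), hgv (t + 1) ht]
      have e1 : g a + (t : ZMod N) * 1 = g a + (t : ZMod N) := by ring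
      have e2 : g a + ((t + 1 : ℕ) : ZMod N) * 1 = g a + (t : ZMod N) + 1 := by push_cast; ring
      rw [e1, e2]
    have hm : ∀ t : ℕ, t < L → g a + (t : ZMod N) ≠ -1 := by
      intro t ht hc
      apply he0
      rw [TollAux.mem_edges_iff]
      refine ⟨t, ht, ?_⟩
      rw [hedge t ht, hc]
    have hQ : W.edges.toFinset =
        (Finset.range L).image (fun t : ℕ => s(x (g a + (t:ZMod N)), x (g a + (t:ZMod N) + 1))) := by
      ext e
      rw [List.mem_toFinset, TollAux.mem_edges_iff]
      simp only [Finset.mem_image, Finset.mem_range]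
      constructor
      · rintro ⟨t, ht, rfl⟩
        exact ⟨t, ht, (hedge t ht).symm⟩
      · rintro ⟨t, ht, rfl⟩
        exact ⟨t, ht, (hedge t ht).symm⟩
    rw [hQ, Finset.image_image]
    have hcongr : ∀ t ∈ Finset.range L,
        (ρ ∘ fun t : ℕ => s(x (g a + (t:ZMod N)), x (g a + (t:ZMod N) + 1))) t
          = (fun s : ℕ => ((g a + (s : ZMod N)).val)) t := by
      intro t _
      exact hρ (g a + (t : ZMod N))
    rw [Finset.image_congr hcongr, image_run hN3 (by omega) hm]
    exact ⟨(g a).val, (g a).val + L - 1, by omega, rfl⟩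
  · -- δ = -1
    set m0 : ZMod N := g a - (L : ZMod N) with hm0
    have hco' : ∀ t, t < L → ((L - 1 - t : ℕ) : ZMod N) = (L : ZMod N) - 1 - (t : ZMod N) := by
      intro t ht
      push_cast [Nat.cast_sub (by omega : t ≤ L - 1), Nat.cast_sub (by omega : 1 ≤ L)]
      ring
    have hedge : ∀ t, t < L →
        s(W.getVert t, W.getVert (t + 1))
          = s(x (m0 + ((L - 1 - t : ℕ) : ZMod N)), x (m0 + ((L - 1 - t : ℕ) : ZMod N) + 1)) := by
      intro t ht
      rw [hgv t (le_of_lt ht), hgv (t + 1) ht]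
      have e1 : m0 + ((L - 1 - t : ℕ) : ZMod N) = g a + ((t + 1 : ℕ) : ZMod N) * (-1) := by
        rw [hco' t ht, hm0]
        push_cast
        ring
      have e2 : m0 + ((L - 1 - t : ℕ) : ZMod N) + 1 = g a + (t : ZMod N) * (-1) := by
        rw [hco' t ht, hm0]
        push_cast
        ring
      rw [e2, e1, Sym2.eq_swap]
    have hm : ∀ s : ℕ, s < L → m0 + (s : ZMod N) ≠ -1 := by
      intro s hs hc
      apply he0
      rw [TollAux.mem_edges_iff]
      refine ⟨L - 1 - s, by omega, ?_⟩
      have e : L - 1 - (L - 1 - s) = s := by omega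
      rw [hedge (L - 1 - s) (by omega), e, hc]
    have hQ : W.edges.toFinset =
        (Finset.range L).image
          (fun t : ℕ => s(x (m0 + ((L - 1 - t : ℕ) : ZMod N)), x (m0 + ((L - 1 - t : ℕ) : ZMod N) + 1))) := by
      ext e
      rw [List.mem_toFinset, TollAux.mem_edges_iff]
      simp only [Finset.mem_image, Finset.mem_range]
      constructor
      · rintro ⟨t, ht, rfl⟩
        exact ⟨t, ht, (hedge t ht).symm⟩
      · rintro ⟨t, ht, rfl⟩
        exact ⟨t, ht, (hedge t ht).symm⟩
    rw [hQ, Finset.image_image]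
    have hcongr : ∀ t ∈ Finset.range L,
        (ρ ∘ fun t : ℕ => s(x (m0 + ((L - 1 - t : ℕ) : ZMod N)), x (m0 + ((L - 1 - t : ℕ) : ZMod N) + 1))) t
          = (fun t : ℕ => ((m0 + ((L - 1 - t : ℕ) : ZMod N)).val)) t := by
      intro t _
      exact hρ (m0 + ((L - 1 - t : ℕ) : ZMod N))
    rw [Finset.image_congr hcongr]
    have hre : (Finset.range L).image (fun t : ℕ => ((m0 + ((L - 1 - t : ℕ) : ZMod N)).val))
        = (Finset.range L).image (fun s : ℕ => (m0 + (s : ZMod N)).val) := by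
      ext i
      simp only [Finset.mem_image, Finset.mem_range]
      constructor
      · rintro ⟨t, ht, rfl⟩
        exact ⟨L - 1 - t, by omega, rfl⟩
      · rintro ⟨s, hs, rfl⟩
        refine ⟨L - 1 - s, by omega, ?_⟩
        have e : L - 1 - (L - 1 - s) = s := by omega
        rw [e]
    rw [hre, image_run hN3 (by omega) hm]
    exact ⟨m0.val, m0.val + L - 1, by omega, rfl⟩

end TollAux2



namespace TollAux3

open Finset

lemma tele (F : ℕ → ℝ≥0) (hm : Monotone F) :
    ∀ a b, a ≤ b → ∑ r ∈ Finset.Icc a b, (F (r + 1) - F r) = F (b + 1) - F a := by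
  intro a b hab
  induction b, hab using Nat.le_induction with
  | base => simp
  | succ b hab ih =>
    rw [Finset.sum_Icc_succ_top (by omega), ih, add_comm]
    exact tsub_add_tsub_cancel (hm (by omega)) (hm (by omega))

end TollAux3
namespace TollAux4

open Finset

lemma process {V : Type*} [Fintype V] [DecidableEq V] (G : SimpleGraph V) {n : ℕ}
    (Q : Fin n → Finset (Sym2 V)) (v : Fin n → ℝ≥0) (p : Sym2 V → ℝ≥0∞)
    (T : Finset (Fin n))
    (hQE : ∀ j, Q j ⊆ G.edgeFinset)
    (hTpair : (↑T : Set (Fin n)).Pairwise fun j k => Disjoint (Q j) (Q k))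
    (hstrict : ∀ j, ¬ (Tollbooth.price p (Q j) < (v j : ℝ≥0∞)))
    (hTeq : ∀ j ∈ T, Tollbooth.price p (Q j) = (v j : ℝ≥0∞))
    (σ : Equiv.Perm (Fin n)) :
    T ⊆ Tollbooth.purchased G p Q v σ (fun j => decide (j ∈ T)) := by
  classical
  set t : Fin n → Bool := fun j => decide (j ∈ T) with htdef
  set P : Finset (Sym2 V) × Finset (Fin n) → Prop :=
    fun st => st.2 ⊆ T ∧ st.1 = G.edgeFinset \ st.2.biUnion Q with hPdef
  have hstep : ∀ st j, P st → P (Tollbooth.step p Q v t st j) ∧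
      st.2 ⊆ (Tollbooth.step p Q v t st j).2 ∧
      (j ∈ T → j ∈ (Tollbooth.step p Q v t st j).2) := by
    intro st j hP
    rw [hPdef] at hP
    rw [Tollbooth.step]
    split_ifs with hcond
    · have hjT : j ∈ T := by
        rcases hcond.2 with hlt | ⟨_, htie⟩
        · exact absurd hlt (hstrict j)
        · rw [htdef] at htie
          exact of_decide_eq_true htie
      refine ⟨⟨Finset.insert_subset hjT hP.1, ?_⟩, Finset.subset_insert _ _,
        fun _ => Finset.mem_insert_self _ _⟩
      show st.1 \ Q j = G.edgeFinset \ (insert j st.2).biUnion Q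
      rw [hP.2, Finset.biUnion_insert, sdiff_sdiff_left, Finset.sup_eq_union,
        Finset.union_comm]
    · refine ⟨⟨hP.1, hP.2⟩, subset_rfl, ?_⟩
      intro hjT
      by_contra hj2
      apply hcond
      constructor
      · rw [hP.2]
        intro e he
        rw [Finset.mem_sdiff]
        refine ⟨hQE j he, ?_⟩
        rw [Finset.mem_biUnion]
        rintro ⟨s, hs2, hes⟩
        have hsT : s ∈ T := hP.1 hs2
        have hsj : s ≠ j := fun h => hj2 (h ▸ hs2)
        have hd := hTpair (Finset.mem_coe.mpr hsT) (Finset.mem_coe.mpr hjT) hsj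
        exact (Finset.disjoint_left.mp hd hes) he
      · right
        exact ⟨hTeq j hjT, by rw [htdef]; simp [hjT]⟩
  have main : ∀ (l : List (Fin n)) st, P st →
      P (l.foldl (Tollbooth.step p Q v t) st) ∧
      st.2 ⊆ (l.foldl (Tollbooth.step p Q v t) st).2 ∧
      ∀ j ∈ l, j ∈ T → j ∈ (l.foldl (Tollbooth.step p Q v t) st).2 := by
    intro l
    induction l with
    | nil => intro st h; exact ⟨h, subset_rfl, by simp⟩
    | cons a l ih =>
      intro st hst
      rw [List.foldl_cons]
      obtain ⟨h1, h2, h3⟩ := hstep st a hst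
      obtain ⟨g1, g2, g3⟩ := ih _ h1
      refine ⟨g1, h2.trans g2, ?_⟩
      intro j hj hjT
      rcases List.mem_cons.mp hj with rfl | hj'
      · exact g2 (h3 hjT)
      · exact g3 j hj' hjT
  intro j hjT
  rw [Tollbooth.purchased]
  have hjl : j ∈ List.ofFn (fun i => σ i) := by
    rw [List.mem_ofFn]
    exact ⟨σ.symm j, by simp⟩
  exact (main _ (G.edgeFinset, ∅) ⟨Finset.empty_subset _, by simp [hPdef]⟩).2.2 j hjl hjT

end TollAux4


/-- For every tollbooth instance on a cycle graph, there exists an item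
pricing `p` such that for every arrival order `σ` there is a tie-breaking choice `t` with
`Wel(p,σ,t) ≥ OPT/2`. -/
theorem cycle_gap_le_two {V : Type*} [Fintype V] [DecidableEq V]
    (G : SimpleGraph V) (hG : Tollbooth.IsCycleGraph G)
    {n : ℕ} (Q : Fin n → Finset (Sym2 V)) (v : Fin n → ℝ≥0)
    (hI : Tollbooth.Instance G Q v) :
    ∃ p : Sym2 V → ℝ≥0∞, ∀ σ : Equiv.Perm (Fin n), ∃ t : Fin n → Bool,
      Tollbooth.OPT Q v / 2 ≤ Tollbooth.Wel G p Q v σ t := by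
  classical
  obtain ⟨hconn, hdeg⟩ := hG
  obtain ⟨N, hN3, x0, hbij0, hadj0⟩ := TollAux.cycle_coords hconn hdeg
  haveI : NeZero N := ⟨by omega⟩
  obtain ⟨hn, hIj⟩ := hI
  have hQpath : ∀ j, Tollbooth.IsPathEdges G (Q j) := fun j => (hIj j).2
  have hQE : ∀ j, Q j ⊆ G.edgeFinset := by
    intro j e he
    obtain ⟨a, b, W, hW, hWne, hQj⟩ := hQpath j
    rw [hQj, List.mem_toFinset] at he
    rw [SimpleGraph.mem_edgeFinset]
    exact W.edges_subset_edgeSet he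
  have hcardV : Fintype.card V = N := by
    rw [← ZMod.card N]
    exact Fintype.card_congr (Equiv.ofBijective x0 hbij0).symm
  have hQcard : ∀ j, (Q j).card < N := by
    intro j
    obtain ⟨a, b, W, hW, hWne, hQj⟩ := hQpath j
    calc (Q j).card ≤ W.edges.length := by
          rw [hQj]; exact List.toFinset_card_le _
      _ = W.length := W.length_edges
      _ < Fintype.card V := hW.length_lt
      _ = N := hcardV
  -- OPT is attained
  have hfilne : (Finset.univ.powerset.filter fun S : Finset (Fin n) =>
      (S : Set (Fin n)).Pairwise fun j k => Disjoint (Q j) (Q k)).Nonempty := ⟨∅, by simp⟩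
  obtain ⟨S, hSmem, hOPTeq⟩ := Finset.exists_mem_eq_sup _ hfilne
      (fun S : Finset (Fin n) => ∑ j ∈ S, v j)
  have hOPTS : Tollbooth.OPT Q v = ∑ j ∈ S, v j := hOPTeq
  rw [Finset.mem_filter] at hSmem
  have hSpair := hSmem.2
  rcases S.eq_empty_or_nonempty with rfl | hSne
  · refine ⟨fun _ => ⊤, fun σ => ⟨fun _ => false, ?_⟩⟩
    rw [hOPTS]
    simp
  obtain ⟨js, hjsS, hjsmax⟩ := S.exists_max_image v hSne
  -- choose the cut edge e0 avoiding Q js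
  obtain ⟨e0, he0E, he0Q⟩ : ∃ e0, e0 ∈ G.edgeFinset ∧ e0 ∉ Q js := by
    by_contra hcon
    push_neg at hcon
    have hinj0 : Function.Injective (fun w : ZMod N => s(x0 w, x0 (w + 1))) :=
      fun w w' h => TollAux2.edge_inj hN3 hbij0.injective h
    have hedgeE : G.edgeFinset = Finset.univ.image (fun w : ZMod N => s(x0 w, x0 (w + 1))) := by
      ext e
      simp only [Finset.mem_image, Finset.mem_univ, true_and]
      constructor
      · intro he
        obtain ⟨w, rfl⟩ :=
          TollAux2.edge_form hN3 hbij0 hadj0 (SimpleGraph.mem_edgeFinset.mp he)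
        exact ⟨w, rfl⟩
      · rintro ⟨w, rfl⟩
        rw [SimpleGraph.mem_edgeFinset, SimpleGraph.mem_edgeSet]
        exact (hadj0 w (w + 1)).mpr (Or.inl rfl)
    have hedgecard : G.edgeFinset.card = N := by
      rw [hedgeE, Finset.card_image_of_injective _ hinj0, Finset.card_univ, ZMod.card]
    have hsub : G.edgeFinset ⊆ Q js := fun e he => hcon e he
    have h1 := Finset.card_le_card hsub
    have h2 := hQcard js
    omega
  obtain ⟨c, hc⟩ := TollAux2.edge_form hN3 hbij0 hadj0 (SimpleGraph.mem_edgeFinset.mp he0E)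
  -- shifted coordinates
  set x : ZMod N → V := fun i => x0 (i + (c + 1)) with hxdef
  have hbij : Function.Bijective x := hbij0.comp (Equiv.addRight (c + 1)).bijective
  have hadj : ∀ i j : ZMod N, G.Adj (x i) (x j) ↔ j = i + 1 ∨ i = j + 1 := by
    intro i j
    rw [show x i = x0 (i + (c + 1)) from rfl, show x j = x0 (j + (c + 1)) from rfl, hadj0]
    constructor
    · rintro (h | h)
      · left
        have h2 : j + (c + 1) = (i + 1) + (c + 1) := by rw [h]; ring
        exact add_right_cancel h2
      · right
        have h2 : i + (c + 1) = (j + 1) + (c + 1) := by rw [h]; ring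
        exact add_right_cancel h2
    · rintro (rfl | rfl)
      · left; ring
      · right; ring
  have he0x : e0 = s(x (-1), x 0) := by
    rw [hc]
    have h1 : x (-1) = x0 c := by
      show x0 (-1 + (c + 1)) = x0 c
      congr 1; ring
    have h2 : x 0 = x0 (c + 1) := by
      show x0 (0 + (c + 1)) = x0 (c + 1)
      congr 1; ring
    rw [h1, h2]
  -- edge ranks
  set ρ : Sym2 V → ℕ := fun e =>
    if h : ∃ w : ZMod N, e = s(x w, x (w + 1)) then h.choose.val else 0 with hρdef
  have hρ : ∀ w : ZMod N, ρ s(x w, x (w + 1)) = w.val := by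
    intro w
    have hex : ∃ w' : ZMod N, s(x w, x (w + 1)) = s(x w', x (w' + 1)) := ⟨w, rfl⟩
    show (if h : ∃ w' : ZMod N, s(x w, x (w + 1)) = s(x w', x (w' + 1))
        then h.choose.val else 0) = w.val
    rw [dif_pos hex]
    have hspec := hex.choose_spec
    have hww : w = hex.choose := TollAux2.edge_inj hN3 hbij.injective hspec
    rw [← hww]
  have hρinjE : ∀ e ∈ G.edgeFinset, ∀ e' ∈ G.edgeFinset, ρ e = ρ e' → e = e' := by
    intro e he e' he' hr
    obtain ⟨w, rfl⟩ := TollAux2.edge_form hN3 hbij hadj (SimpleGraph.mem_edgeFinset.mp he)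
    obtain ⟨w', rfl⟩ := TollAux2.edge_form hN3 hbij hadj (SimpleGraph.mem_edgeFinset.mp he')
    rw [hρ, hρ] at hr
    rw [ZMod.val_injective N hr]
  -- interval data
  have hABex : ∀ j : Fin n, ∃ ab : ℕ × ℕ, e0 ∉ Q j →
      ab.1 ≤ ab.2 ∧ (Q j).image ρ = Finset.Icc ab.1 ab.2 := by
    intro j
    by_cases hj : e0 ∉ Q j
    · obtain ⟨a, b, W, hW, hWne, hQj⟩ := hQpath j
      have hlen : W.length ≠ 0 := by
        intro h0
        apply hWne
        have h1 : W.edges.length = 0 := by rw [SimpleGraph.Walk.length_edges, h0]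
        exact List.length_eq_zero_iff.mp h1
      have he0W : s(x (-1), x (-1 + 1)) ∉ W.edges := by
        intro hmem
        apply hj
        rw [hQj, List.mem_toFinset]
        have heq : s(x (-1), x (-1 + 1)) = e0 := by
          rw [he0x]
          have h0 : (-1 + 1 : ZMod N) = 0 := by ring
          rw [h0]
        rwa [heq] at hmem
      obtain ⟨A0, B0, hA0B0, him⟩ :=
        TollAux2.path_interval hN3 x hbij hadj ρ hρ W hW hlen he0W
      exact ⟨(A0, B0), fun _ => ⟨hA0B0, by rw [hQj]; exact him⟩⟩
    · exact ⟨(0, 0), fun h => absurd h hj⟩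
  choose AB hABs using hABex
  set A : Fin n → ℕ := fun j => (AB j).1 with hAdef
  set B : Fin n → ℕ := fun j => (AB j).2 with hBdef
  have hIcc : ∀ j, e0 ∉ Q j → (A j ≤ B j ∧ (Q j).image ρ = Finset.Icc (A j) (B j)) :=
    fun j hj => hABs j hj
  have hrank : ∀ j, e0 ∉ Q j → ∀ e ∈ Q j, A j ≤ ρ e ∧ ρ e ≤ B j := by
    intro j hj e he
    have hmem : ρ e ∈ Finset.Icc (A j) (B j) := by
      rw [← (hIcc j hj).2]
      exact Finset.mem_image_of_mem ρ he
    exact Finset.mem_Icc.mp hmem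
  -- interval disjointness
  have hint : ∀ j k, e0 ∉ Q j → e0 ∉ Q k → j ≠ k → Disjoint (Q j) (Q k) →
      B j < A k ∨ B k < A j := by
    intro j k hj hk hjk hdisj
    by_contra hcon
    push_neg at hcon
    obtain ⟨h1, h2⟩ := hcon
    have hj1 := (hIcc j hj).1
    have hk1 := (hIcc k hk).1
    have hrj : max (A j) (A k) ∈ (Q j).image ρ := by
      rw [(hIcc j hj).2, Finset.mem_Icc]
      omega
    have hrk : max (A j) (A k) ∈ (Q k).image ρ := by
      rw [(hIcc k hk).2, Finset.mem_Icc]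
      omega
    obtain ⟨e, he, hre⟩ := Finset.mem_image.mp hrj
    obtain ⟨e', he', hre'⟩ := Finset.mem_image.mp hrk
    have hee : e = e' := hρinjE e (hQE j he) e' (hQE k he') (by rw [hre, hre'])
    exact (Finset.disjoint_left.mp hdisj he) (hee ▸ he')
  -- the prefix DP
  set feas : Finset (Fin n) → Prop :=
    fun X => (↑X : Set (Fin n)).Pairwise fun j k => Disjoint (Q j) (Q k) with hfeasdef
  set LB : Finset (Fin n) := Finset.univ.filter (fun j => e0 ∉ Q j) with hLBdef
  have hLBmem : ∀ j, j ∈ LB ↔ e0 ∉ Q j := by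
    intro j; rw [hLBdef, Finset.mem_filter]; simp
  set Pref : ℕ → Finset (Fin n) := fun i => LB.filter (fun j => B j < i) with hPrefdef
  have hPrefmem : ∀ j i, j ∈ Pref i ↔ (e0 ∉ Q j ∧ B j < i) := by
    intro j i
    rw [hPrefdef]
    simp only [Finset.mem_filter]
    rw [hLBmem]
  set F : ℕ → ℝ≥0 := fun i => ((Pref i).powerset.filter feas).sup (fun X => ∑ j ∈ X, v j)
    with hFdef
  set Fmax : ℝ≥0 := (LB.powerset.filter feas).sup (fun X => ∑ j ∈ X, v j) with hFmaxdef
  have hFmono : Monotone F := by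
    intro i i' hii'
    apply Finset.sup_mono
    apply Finset.filter_subset_filter
    apply Finset.powerset_mono.mpr
    intro j hj
    rw [hPrefmem] at hj ⊢
    exact ⟨hj.1, by omega⟩
  have hFattain : ∀ i, ∃ X, X ⊆ Pref i ∧ feas X ∧ F i = ∑ j ∈ X, v j := by
    intro i
    have hne : ((Pref i).powerset.filter feas).Nonempty := by
      refine ⟨∅, ?_⟩
      rw [Finset.mem_filter, Finset.mem_powerset]
      refine ⟨Finset.empty_subset _, ?_⟩
      rw [hfeasdef]
      simp
    obtain ⟨X, hX, hFX⟩ := Finset.exists_mem_eq_sup _ hne (fun X => ∑ j ∈ X, v j)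
    rw [Finset.mem_filter, Finset.mem_powerset] at hX
    exact ⟨X, hX.1, hX.2, hFX⟩
  obtain ⟨T, hTLB, hTfeas, hTsum⟩ : ∃ T, T ⊆ LB ∧ feas T ∧ Fmax = ∑ j ∈ T, v j := by
    have hne : (LB.powerset.filter feas).Nonempty := by
      refine ⟨∅, ?_⟩
      rw [Finset.mem_filter, Finset.mem_powerset]
      refine ⟨Finset.empty_subset _, ?_⟩
      rw [hfeasdef]
      simp
    obtain ⟨T, hT, hFT⟩ := Finset.exists_mem_eq_sup _ hne (fun X => ∑ j ∈ X, v j)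
    rw [Finset.mem_filter, Finset.mem_powerset] at hT
    exact ⟨T, hT.1, hT.2, hFT⟩
  have hTpair : (↑T : Set (Fin n)).Pairwise fun j k => Disjoint (Q j) (Q k) := by
    rw [hfeasdef] at hTfeas; exact hTfeas
  have hTline : ∀ j ∈ T, e0 ∉ Q j := fun j hj => (hLBmem j).mp (hTLB hj)
  -- lower and upper bounds for F
  have hFlb : ∀ i, ∑ s ∈ T.filter (fun s => B s < i), v s ≤ F i := by
    intro i
    apply Finset.le_sup (f := fun X => ∑ j ∈ X, v j)
    rw [Finset.mem_filter, Finset.mem_powerset]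
    constructor
    · intro s hs
      rw [Finset.mem_filter] at hs
      rw [hPrefmem]
      exact ⟨hTline s hs.1, hs.2⟩
    · rw [hfeasdef]
      exact hTpair.mono (Finset.coe_subset.mpr (Finset.filter_subset _ _))
  have hFub : ∀ i, F i ≤ ∑ s ∈ T.filter (fun s => A s < i), v s := by
    intro i
    obtain ⟨X, hXP, hXfeas, hFX⟩ := hFattain i
    rw [hFX]
    have hXpair : (↑X : Set (Fin n)).Pairwise fun j k => Disjoint (Q j) (Q k) := by
      rw [hfeasdef] at hXfeas; exact hXfeas
    set T2 := T.filter (fun s => i ≤ A s) with hT2def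
    have hdXT : Disjoint X T2 := by
      rw [Finset.disjoint_left]
      intro s hsX hsT2
      rw [hT2def, Finset.mem_filter] at hsT2
      have h1 := (hPrefmem s i).mp (hXP hsX)
      have h2 := (hIcc s h1.1).1
      omega
    have cross : ∀ a ∈ X, ∀ b ∈ T2, Disjoint (Q a) (Q b) := by
      intro a ha b hb
      rw [Finset.disjoint_left]
      intro e hea heb
      have h1 := (hPrefmem a i).mp (hXP ha)
      have hra := (hrank a h1.1 e hea).2
      rw [hT2def, Finset.mem_filter] at hb
      have hrb := (hrank b (hTline b hb.1) e heb).1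
      omega
    have hfeasY : feas (X ∪ T2) := by
      rw [hfeasdef]
      intro s1 hs1 s2 hs2 hne12
      rw [Finset.coe_union, Set.mem_union] at hs1 hs2
      rcases hs1 with h1 | h1 <;> rcases hs2 with h2 | h2
      · exact hXpair h1 h2 hne12
      · exact cross _ h1 _ h2
      · exact (cross _ h2 _ h1).symm
      · exact hTpair (Finset.mem_coe.mpr ((Finset.filter_subset _ _) h1))
          (Finset.mem_coe.mpr ((Finset.filter_subset _ _) h2)) hne12
    have hYle : ∑ j ∈ X ∪ T2, v j ≤ Fmax := by
      apply Finset.le_sup (f := fun X => ∑ j ∈ X, v j)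
      rw [Finset.mem_filter, Finset.mem_powerset]
      refine ⟨?_, hfeasY⟩
      intro s hs
      rw [Finset.mem_union] at hs
      rcases hs with h | h
      · rw [hLBmem]
        exact ((hPrefmem s i).mp (hXP h)).1
      · exact hTLB ((Finset.filter_subset _ _) h)
    rw [Finset.sum_union hdXT, hTsum] at hYle
    have hsplit : ∑ j ∈ T, v j
        = ∑ j ∈ T.filter (fun s => A s < i), v j + ∑ j ∈ T2, v j := by
      have hfilter : T.filter (fun s => ¬ A s < i) = T.filter (fun s => i ≤ A s) := by
        apply Finset.filter_congr
        intro s _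
        simp [not_lt]
      rw [hT2def, ← Finset.sum_filter_add_sum_filter_not T (fun s => A s < i), hfilter]
    rw [hsplit] at hYle
    exact le_of_add_le_add_right hYle
  -- the two key evaluations of F
  have hfeq1 : ∀ j ∈ T, T.filter (fun s => A s < A j) = T.filter (fun s => B s < A j) := by
    intro j hj
    apply Finset.filter_congr
    intro s hs
    constructor
    · intro hAs
      have hsj : s ≠ j := fun h => by rw [h] at hAs; omega
      rcases hint s j (hTline s hs) (hTline j hj) hsj
          (hTpair (Finset.mem_coe.mpr hs) (Finset.mem_coe.mpr hj) hsj) with h | h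
      · exact h
      · have := (hIcc j (hTline j hj)).1
        omega
    · intro hBs
      have := (hIcc s (hTline s hs)).1
      omega
  have hfeq2 : ∀ j ∈ T,
      T.filter (fun s => A s < B j + 1) = T.filter (fun s => B s < B j + 1) := by
    intro j hj
    apply Finset.filter_congr
    intro s hs
    constructor
    · intro hAs
      by_cases hsj : s = j
      · subst hsj; omega
      rcases hint s j (hTline s hs) (hTline j hj) hsj
          (hTpair (Finset.mem_coe.mpr hs) (Finset.mem_coe.mpr hj) hsj) with h | h
      · have := (hIcc j (hTline j hj)).1
        omega
      · omega
    · intro hBs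
      have := (hIcc s (hTline s hs)).1
      omega
  have hFA : ∀ j ∈ T, F (A j) = ∑ s ∈ T.filter (fun s => B s < A j), v s := by
    intro j hj
    refine le_antisymm ?_ (hFlb _)
    calc F (A j) ≤ ∑ s ∈ T.filter (fun s => A s < A j), v s := hFub _
      _ = _ := by rw [hfeq1 j hj]
  have hFB : ∀ j ∈ T, F (B j + 1) = ∑ s ∈ T.filter (fun s => B s < B j + 1), v s := by
    intro j hj
    refine le_antisymm ?_ (hFlb _)
    calc F (B j + 1) ≤ ∑ s ∈ T.filter (fun s => A s < B j + 1), v s := hFub _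
      _ = _ := by rw [hfeq2 j hj]
  -- prices
  set D : Finset (Sym2 V) := G.edgeFinset.erase e0 with hDdef
  set p : Sym2 V → ℝ≥0∞ :=
    fun e => if e ∈ D then ((F (ρ e + 1) - F (ρ e) : ℝ≥0) : ℝ≥0∞) else ⊤ with hpdef
  have hpe0 : p e0 = ⊤ := by
    rw [hpdef]
    simp [hDdef]
  have hpD : ∀ e ∈ D, p e = ((F (ρ e + 1) - F (ρ e) : ℝ≥0) : ℝ≥0∞) := by
    intro e he
    rw [hpdef]
    simp [he]
  have hQD : ∀ j, e0 ∉ Q j → Q j ⊆ D := by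
    intro j hj e he
    rw [hDdef, Finset.mem_erase]
    exact ⟨fun h => hj (h ▸ he), hQE j he⟩
  have htele : ∀ j, e0 ∉ Q j →
      Tollbooth.price p (Q j) = ((F (B j + 1) - F (A j) : ℝ≥0) : ℝ≥0∞) := by
    intro j hj
    rw [Tollbooth.price]
    rw [Finset.sum_congr rfl (fun e he => hpD e (hQD j hj he))]
    rw [← ENNReal.coe_finset_sum]
    rw [ENNReal.coe_inj]
    have hinj : ∀ e ∈ Q j, ∀ e' ∈ Q j, ρ e = ρ e' → e = e' :=
      fun e he e' he' => hρinjE e (hQE j he) e' (hQE j he')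
    have hsum := Finset.sum_image (f := fun r => F (r + 1) - F r) (g := ρ) (s := Q j) hinj
    rw [(hIcc j hj).2] at hsum
    rw [← hsum]
    exact TollAux3.tele F hFmono (A j) (B j) (hIcc j hj).1
  have hpricege : ∀ j : Fin n, (v j : ℝ≥0∞) ≤ Tollbooth.price p (Q j) := by
    intro j
    by_cases hj : e0 ∉ Q j
    · rw [htele j hj, ENNReal.coe_le_coe]
      have hkey : F (A j) + v j ≤ F (B j + 1) := by
        obtain ⟨X, hXP, hXfeas, hFX⟩ := hFattain (A j)
        have hXpair : (↑X : Set (Fin n)).Pairwise fun j k => Disjoint (Q j) (Q k) := by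
          rw [hfeasdef] at hXfeas; exact hXfeas
        have hjX : j ∉ X := by
          intro hjX
          have h1 := (hPrefmem j (A j)).mp (hXP hjX)
          have h2 := (hIcc j hj).1
          omega
        have hdisjjX : ∀ s ∈ X, Disjoint (Q j) (Q s) := by
          intro s hsX
          rw [Finset.disjoint_left]
          intro e hej hes
          have h1 := (hrank j hj e hej).1
          have h2 := (hPrefmem s (A j)).mp (hXP hsX)
          have h3 := (hrank s h2.1 e hes).2
          omega
        have hins : insert j X ∈ (Pref (B j + 1)).powerset.filter feas := by
          rw [Finset.mem_filter, Finset.mem_powerset]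
          constructor
          · intro s hs
            rcases Finset.mem_insert.mp hs with rfl | hsX
            · rw [hPrefmem]
              exact ⟨hj, by omega⟩
            · have h1 := (hPrefmem s (A j)).mp (hXP hsX)
              rw [hPrefmem]
              have h2 := (hIcc j hj).1
              exact ⟨h1.1, by omega⟩
          · rw [hfeasdef]
            intro s1 hs1 s2 hs2 hne12
            rw [Finset.coe_insert, Set.mem_insert_iff] at hs1 hs2
            rcases hs1 with rfl | hs1 <;> rcases hs2 with rfl | hs2
            · exact absurd rfl hne12
            · exact hdisjjX _ hs2
            · exact (hdisjjX _ hs1).symm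
            · exact hXpair hs1 hs2 hne12
        have hle : ∑ s ∈ insert j X, v s ≤ F (B j + 1) :=
          Finset.le_sup (f := fun Y => ∑ s ∈ Y, v s) hins
        rw [Finset.sum_insert hjX] at hle
        calc F (A j) + v j = v j + ∑ s ∈ X, v s := by rw [hFX]; ring
          _ ≤ F (B j + 1) := hle
      exact le_tsub_of_add_le_left hkey
    · push_neg at hj
      have htop : Tollbooth.price p (Q j) = ⊤ := by
        rw [eq_top_iff]
        calc (⊤ : ℝ≥0∞) = p e0 := hpe0.symm
          _ ≤ Tollbooth.price p (Q j) :=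
            Finset.single_le_sum (fun e _ => (zero_le : 0 ≤ p e)) hj
      rw [htop]
      exact le_top
  have hstrict : ∀ j, ¬(Tollbooth.price p (Q j) < (v j : ℝ≥0∞)) :=
    fun j => not_lt.mpr (hpricege j)
  have hpriceeq : ∀ j ∈ T, Tollbooth.price p (Q j) = (v j : ℝ≥0∞) := by
    intro j hj
    have hjline := hTline j hj
    rw [htele j hjline, ENNReal.coe_inj, hFB j hj, hFA j hj]
    have hsub : T.filter (fun s => B s < A j) ⊆ T.filter (fun s => B s < B j + 1) := by
      intro s hs
      rw [Finset.mem_filter] at hs ⊢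
      have := (hIcc j hjline).1
      exact ⟨hs.1, by omega⟩
    have hsdiff : T.filter (fun s => B s < B j + 1) \ T.filter (fun s => B s < A j)
        = {j} := by
      ext s
      simp only [Finset.mem_sdiff, Finset.mem_filter, Finset.mem_singleton]
      constructor
      · rintro ⟨⟨hsT, h1⟩, h2⟩
        have h3 : ¬ B s < A j := fun hc => h2 ⟨hsT, hc⟩
        push_neg at h3
        by_contra hne
        rcases hint s j (hTline s hsT) hjline hne
            (hTpair (Finset.mem_coe.mpr hsT) (Finset.mem_coe.mpr hj) hne) with h | h
        · omega
        · have := (hIcc s (hTline s hsT)).1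
          omega
      · rintro rfl
        have := (hIcc _ hjline).1
        refine ⟨⟨hj, by omega⟩, ?_⟩
        rintro ⟨_, hc⟩
        omega
    have hss := Finset.sum_sdiff (f := v) hsub
    rw [hsdiff, Finset.sum_singleton] at hss
    rw [← hss]
    rw [add_tsub_cancel_right]
  -- run the process
  refine ⟨p, fun σ => ⟨fun j => decide (j ∈ T), ?_⟩⟩
  have hsubT := TollAux4.process G Q v p T hQE hTpair hstrict hpriceeq σ
  have hWel : ∑ j ∈ T, v j ≤ Tollbooth.Wel G p Q v σ (fun j => decide (j ∈ T)) := by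
    rw [Tollbooth.Wel]
    exact Finset.sum_le_sum_of_subset hsubT
  -- compare with OPT
  set S' := S.filter (fun j => e0 ∉ Q j) with hS'def
  have hS'le : ∑ j ∈ S', v j ≤ Fmax := by
    apply Finset.le_sup (f := fun X => ∑ j ∈ X, v j)
    rw [Finset.mem_filter, Finset.mem_powerset]
    constructor
    · intro s hs
      rw [hS'def, Finset.mem_filter] at hs
      rw [hLBmem]
      exact hs.2
    · rw [hfeasdef]
      exact hSpair.mono (Finset.coe_subset.mpr (by rw [hS'def]; exact Finset.filter_subset _ _))
  have hOPT2 : Tollbooth.OPT Q v ≤ 2 * ∑ j ∈ S', v j := by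
    rw [hOPTS]
    have hsplit : ∑ j ∈ S, v j
        = ∑ j ∈ S', v j + ∑ j ∈ S.filter (fun j => ¬ e0 ∉ Q j), v j := by
      rw [hS'def]
      exact (Finset.sum_filter_add_sum_filter_not S _ v).symm
    rw [hsplit]
    rcases (S.filter (fun j => ¬ e0 ∉ Q j)).eq_empty_or_nonempty with hE | ⟨j1, hj1⟩
    · rw [hE, Finset.sum_empty, add_zero, two_mul]
      exact le_self_add
    · have hj1S := (Finset.mem_filter.mp hj1).1
      have hj1e0 : e0 ∈ Q j1 := not_not.mp (Finset.mem_filter.mp hj1).2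
      have hfeq : S.filter (fun j => ¬ e0 ∉ Q j) = {j1} := by
        apply Finset.Subset.antisymm
        · intro s hs
          rw [Finset.mem_singleton]
          by_contra hne
          have hsS := (Finset.mem_filter.mp hs).1
          have hse0 : e0 ∈ Q s := not_not.mp (Finset.mem_filter.mp hs).2
          have hd := hSpair (Finset.mem_coe.mpr hsS) (Finset.mem_coe.mpr hj1S) hne
          exact (Finset.disjoint_left.mp hd hse0) hj1e0
        · rw [Finset.singleton_subset_iff]
          exact hj1
      rw [hfeq, Finset.sum_singleton]
      have hv1 : v j1 ≤ v js := hjsmax j1 hj1S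
      have hjsS' : js ∈ S' := by
        rw [hS'def, Finset.mem_filter]
        exact ⟨hjsS, he0Q⟩
      have hvs : v js ≤ ∑ j ∈ S', v j :=
        Finset.single_le_sum (fun i _ => (zero_le : 0 ≤ v i)) hjsS'
      calc ∑ j ∈ S', v j + v j1 ≤ ∑ j ∈ S', v j + ∑ j ∈ S', v j :=
            add_le_add le_rfl (hv1.trans hvs)
        _ = 2 * ∑ j ∈ S', v j := (two_mul _).symm
  rw [div_le_iff₀ (by norm_num : (0 : ℝ≥0) < 2)]
  calc Tollbooth.OPT Q v ≤ 2 * ∑ j ∈ S', v j := hOPT2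
    _ ≤ 2 * Fmax := by exact mul_le_mul_right hS'le 2
    _ = 2 * ∑ j ∈ T, v j := by rw [hTsum]
    _ ≤ 2 * Tollbooth.Wel G p Q v σ (fun j => decide (j ∈ T)) := mul_le_mul_right hWel 2
    _ = Tollbooth.Wel G p Q v σ (fun j => decide (j ∈ T)) * 2 := by ring
end
end

section
/- There exists a tollbooth instance on a path graph with three edges and four buyers, with OPT = 3, such that for every item pricing p there exist an arrival order σ and a tie-breaking choice t with Wel(p,σ,t) ≤ 2. (When the seller has no tie-breaking power, no item pricing on this path instance achieves worst-case welfare more than (2/3)·OPT; concretely, the instance is a path with edges e1,e2,e3 in this order, buyer 1 demanding {e1} with value 1, buyer 2 demanding {e3} with value 1, buyer 3 demanding {e1,e2} with value 2, and buyer 4 demanding {e2,e3} with value 2.) -/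
open scoped Classical NNReal ENNReal

noncomputable section

section Aux
open Tollbooth

def myG : SimpleGraph (Fin 4) where
  Adj a b := a.val + 1 = b.val ∨ b.val + 1 = a.val
  symm := ⟨by intro a b h; tauto⟩
  loopless := ⟨by intro a h; omega⟩

instance : DecidableRel myG.Adj := fun a b => by unfold myG; simp only; infer_instance

instance (e : Sym2 (Fin 4)) : DecidableRel (myG \ SimpleGraph.fromEdgeSet {e}).Adj := fun a b =>
  decidable_of_iff (myG.Adj a b ∧ ¬(s(a,b) = e ∧ a ≠ b)) (by
    simp [SimpleGraph.sdiff_adj, SimpleGraph.fromEdgeSet_adj])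

def vv : Fin 4 → ℝ≥0 := ![1,1,2,2]
def QQ : Fin 4 → Finset (Sym2 (Fin 4)) := ![{s(0,1)}, {s(2,3)}, {s(0,1),s(1,2)}, {s(1,2),s(2,3)}]

lemma myG_edgeFinset (inst : Fintype ↥myG.edgeSet) :
    @SimpleGraph.edgeFinset _ myG inst = {s(0,1), s(1,2), s(2,3)} := by
  ext e
  rw [SimpleGraph.mem_edgeFinset]
  revert e; decide

lemma step_pos {n : ℕ} {p : Sym2 (Fin 4) → ℝ≥0∞} {Q : Fin n → Finset (Sym2 (Fin 4))}
    {v : Fin n → ℝ≥0} {t : Fin n → Bool} {st : Finset (Sym2 (Fin 4)) × Finset (Fin n)}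
    {j : Fin n} (h1 : Q j ⊆ st.1) (h2 : price p (Q j) ≤ (v j : ℝ≥0∞)) (h3 : t j = true) :
    step p Q v t st j = (st.1 \ Q j, insert j st.2) :=
  if_pos ⟨h1, h2.lt_or_eq.imp id fun h => ⟨h, h3⟩⟩

lemma step_neg_subset {n : ℕ} {p : Sym2 (Fin 4) → ℝ≥0∞} {Q : Fin n → Finset (Sym2 (Fin 4))}
    {v : Fin n → ℝ≥0} {t : Fin n → Bool} {st : Finset (Sym2 (Fin 4)) × Finset (Fin n)}
    {j : Fin n} (h : ¬ Q j ⊆ st.1) : step p Q v t st j = st :=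
  if_neg fun hc => h hc.1

lemma step_neg_price {n : ℕ} {p : Sym2 (Fin 4) → ℝ≥0∞} {Q : Fin n → Finset (Sym2 (Fin 4))}
    {v : Fin n → ℝ≥0} {t : Fin n → Bool} {st : Finset (Sym2 (Fin 4)) × Finset (Fin n)}
    {j : Fin n} (h2 : (v j : ℝ≥0∞) ≤ price p (Q j)) (h3 : t j = false) :
    step p Q v t st j = st := by
  refine if_neg fun hc => ?_
  rcases hc.2 with h | ⟨_, ht⟩
  · exact absurd h2 (not_le.mpr h)
  · simp [h3] at ht

lemma mem_snd_foldl {n : ℕ} {p : Sym2 (Fin 4) → ℝ≥0∞} {Q : Fin n → Finset (Sym2 (Fin 4))}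
    {v : Fin n → ℝ≥0} {t : Fin n → Bool} (l : List (Fin n))
    (st : Finset (Sym2 (Fin 4)) × Finset (Fin n)) (j : Fin n)
    (h : j ∈ (l.foldl (step p Q v t) st).2) :
    j ∈ st.2 ∨ price p (Q j) < (v j : ℝ≥0∞) ∨
      (price p (Q j) = (v j : ℝ≥0∞) ∧ t j = true) := by
  induction l generalizing st with
  | nil => exact Or.inl h
  | cons a l ih =>
    rcases ih _ h with h' | h'
    · by_cases hcond : Q a ⊆ st.1 ∧ (price p (Q a) < (v a : ℝ≥0∞) ∨
          (price p (Q a) = (v a : ℝ≥0∞) ∧ t a = true))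
      · rw [step, if_pos hcond] at h'
        rcases Finset.mem_insert.mp h' with rfl | h''
        · exact Or.inr hcond.2
        · exact Or.inl h''
      · rw [step, if_neg hcond] at h'
        exact Or.inl h'
    · exact Or.inr h'

def σ2 : Equiv.Perm (Fin 4) := ⟨![2,3,0,1], ![2,3,0,1], by decide, by decide⟩
def σ3 : Equiv.Perm (Fin 4) := ⟨![3,2,0,1], ![2,3,1,0], by decide, by decide⟩

lemma case1 {p : Sym2 (Fin 4) → ℝ≥0∞} (h1 : p s(0,1) ≤ 1) (h3 : p s(2,3) ≤ 1) :
    Wel myG p QQ vv 1 ![true,true,false,false] ≤ 2 := by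
  have hc0 : price p (QQ 0) ≤ ((vv 0 : ℝ≥0) : ℝ≥0∞) := by
    simpa [price, QQ, vv] using h1
  have hc1 : price p (QQ 1) ≤ ((vv 1 : ℝ≥0) : ℝ≥0∞) := by
    simpa [price, QQ, vv] using h3
  have hP : purchased myG p QQ vv 1 ![true,true,false,false] = {1, 0} := by
    unfold purchased
    rw [myG_edgeFinset]
    rw [show (List.ofFn fun i => (1 : Equiv.Perm (Fin 4)) i) = [0,1,2,3] by decide]
    simp only [List.foldl]
    rw [step_pos (by decide) hc0 rfl]
    rw [show ((({s(0,1),s(1,2),s(2,3)} : Finset (Sym2 (Fin 4))) \ QQ 0, insert (0:Fin 4) (∅ : Finset (Fin 4))) : _ × _)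
        = ({s(1,2),s(2,3)}, {0}) by decide]
    rw [step_pos (by decide) hc1 rfl]
    rw [show ((({s(1,2),s(2,3)} : Finset (Sym2 (Fin 4))) \ QQ 1, insert (1:Fin 4) ({0} : Finset (Fin 4))) : _ × _)
        = ({s(1,2)}, {1,0}) by decide]
    rw [step_neg_subset (st := ({s(1,2)}, {1,0})) (j := 2) (by decide),
        step_neg_subset (st := ({s(1,2)}, {1,0})) (j := 3) (by decide)]
  unfold Wel
  rw [hP, Finset.sum_pair (by decide)]
  norm_num [vv]

lemma case2 {p : Sym2 (Fin 4) → ℝ≥0∞} (h12 : p s(0,1) + p s(1,2) ≤ 2) (h3 : 1 ≤ p s(2,3)) :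
    Wel myG p QQ vv σ2 ![false,false,true,false] ≤ 2 := by
  have hc2 : price p (QQ 2) ≤ ((vv 2 : ℝ≥0) : ℝ≥0∞) := by
    rw [show QQ 2 = {s(0,1),s(1,2)} from rfl, price, Finset.sum_pair (by decide)]
    simpa [vv] using h12
  have hc1 : ((vv 1 : ℝ≥0) : ℝ≥0∞) ≤ price p (QQ 1) := by
    simpa [price, QQ, vv] using h3
  have hP : purchased myG p QQ vv σ2 ![false,false,true,false] = {2} := by
    unfold purchased
    rw [myG_edgeFinset]
    rw [show (List.ofFn fun i => σ2 i) = [2,3,0,1] by decide]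
    simp only [List.foldl]
    rw [step_pos (by decide) hc2 rfl]
    rw [show ((({s(0,1),s(1,2),s(2,3)} : Finset (Sym2 (Fin 4))) \ QQ 2, insert (2:Fin 4) (∅ : Finset (Fin 4))) : _ × _)
        = ({s(2,3)}, {2}) by decide]
    rw [step_neg_subset (st := ({s(2,3)}, {2})) (j := 3) (by decide),
        step_neg_subset (st := ({s(2,3)}, {2})) (j := 0) (by decide)]
    rw [step_neg_price (st := ({s(2,3)}, {2})) (j := 1) hc1 rfl]
  unfold Wel
  rw [hP, Finset.sum_singleton]
  norm_num [vv, Matrix.cons_val_two]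

lemma case3 {p : Sym2 (Fin 4) → ℝ≥0∞} (h23 : p s(1,2) + p s(2,3) ≤ 2) (h1 : 1 ≤ p s(0,1)) :
    Wel myG p QQ vv σ3 ![false,false,false,true] ≤ 2 := by
  have hc3 : price p (QQ 3) ≤ ((vv 3 : ℝ≥0) : ℝ≥0∞) := by
    rw [show QQ 3 = {s(1,2),s(2,3)} from rfl, price, Finset.sum_pair (by decide)]
    simpa [vv] using h23
  have hc0 : ((vv 0 : ℝ≥0) : ℝ≥0∞) ≤ price p (QQ 0) := by
    simpa [price, QQ, vv] using h1
  have hP : purchased myG p QQ vv σ3 ![false,false,false,true] = {3} := by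
    unfold purchased
    rw [myG_edgeFinset]
    rw [show (List.ofFn fun i => σ3 i) = [3,2,0,1] by decide]
    simp only [List.foldl]
    rw [step_pos (by decide) hc3 rfl]
    rw [show ((({s(0,1),s(1,2),s(2,3)} : Finset (Sym2 (Fin 4))) \ QQ 3, insert (3:Fin 4) (∅ : Finset (Fin 4))) : _ × _)
        = ({s(0,1)}, {3}) by decide]
    rw [step_neg_subset (st := ({s(0,1)}, {3})) (j := 2) (by decide)]
    rw [step_neg_price (st := ({s(0,1)}, {3})) (j := 0) hc0 rfl]
    rw [step_neg_subset (st := ({s(0,1)}, {3})) (j := 1) (by decide)]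
  unfold Wel
  rw [hP, Finset.sum_singleton]
  norm_num [vv, Matrix.cons_val_three]

lemma coe_two : ((2 : ℝ≥0) : ℝ≥0∞) = 2 := by norm_num

lemma case4 {p : Sym2 (Fin 4) → ℝ≥0∞} (hA : 2 ≤ p s(0,1) + p s(1,2))
    (hB : 2 ≤ p s(1,2) + p s(2,3)) :
    Wel myG p QQ vv 1 (fun _ => false) ≤ 2 := by
  have hsub : purchased myG p QQ vv 1 (fun _ => false) ⊆ {0, 1} := by
    intro j hj
    fin_cases j
    · decide
    · decide
    · exfalso
      rcases mem_snd_foldl _ _ _ hj with h | h | ⟨_, ht⟩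
      · simp at h
      · have h' : price p (QQ 2) < ((vv 2 : ℝ≥0) : ℝ≥0∞) := h
        rw [show QQ 2 = ({s(0,1),s(1,2)} : Finset (Sym2 (Fin 4))) by decide,
            show vv 2 = 2 by norm_num [vv, Matrix.cons_val_two], price, Finset.sum_pair (by decide), coe_two] at h'
        exact absurd hA (not_le.mpr h')
      · simp at ht
    · exfalso
      rcases mem_snd_foldl _ _ _ hj with h | h | ⟨_, ht⟩
      · simp at h
      · have h' : price p (QQ 3) < ((vv 3 : ℝ≥0) : ℝ≥0∞) := h
        rw [show QQ 3 = ({s(1,2),s(2,3)} : Finset (Sym2 (Fin 4))) by decide,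
            show vv 3 = 2 by norm_num [vv, Matrix.cons_val_three], price, Finset.sum_pair (by decide), coe_two] at h'
        exact absurd hB (not_le.mpr h')
      · simp at ht
  calc Wel myG p QQ vv 1 (fun _ => false) ≤ ∑ j ∈ ({0,1} : Finset (Fin 4)), vv j :=
        Finset.sum_le_sum_of_subset hsub
    _ = 2 := by rw [Finset.sum_pair (by decide)]; norm_num [vv]

lemma main_bound (p : Sym2 (Fin 4) → ℝ≥0∞) :
    ∃ (σ : Equiv.Perm (Fin 4)) (t : Fin 4 → Bool), Wel myG p QQ vv σ t ≤ 2 := by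
  rcases le_or_gt 2 (p s(0,1) + p s(1,2)) with hA | hA
  · rcases le_or_gt 2 (p s(1,2) + p s(2,3)) with hB | hB
    · exact ⟨1, _, case4 hA hB⟩
    · rcases le_or_gt 1 (p s(0,1)) with h1 | h1
      · exact ⟨σ3, _, case3 hB.le h1⟩
      · have h2 : (1 : ℝ≥0∞) < p s(1,2) := by
          by_contra hle
          push_neg at hle
          have : p s(0,1) + p s(1,2) < 1 + 1 :=
            ENNReal.add_lt_add_of_lt_of_le (ne_top_of_le_ne_top ENNReal.one_ne_top hle) h1 hle
          rw [show ((1:ℝ≥0∞) + 1) = 2 by norm_num] at this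
          exact absurd hA (not_le.mpr this)
        have h3 : p s(2,3) ≤ 1 := by
          by_contra hle
          push_neg at hle
          have : (2 : ℝ≥0∞) ≤ p s(1,2) + p s(2,3) := by
            rw [show (2:ℝ≥0∞) = 1 + 1 by norm_num]
            exact add_le_add h2.le hle.le
          exact absurd hB (not_lt.mpr this)
        exact ⟨1, _, case1 h1.le h3⟩
  · rcases le_or_gt 1 (p s(2,3)) with h3 | h3
    · exact ⟨σ2, _, case2 hA.le h3⟩
    · rcases le_or_gt (p s(0,1)) 1 with h1 | h1
      · exact ⟨1, _, case1 h1 h3.le⟩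
      · have h2 : p s(1,2) < 1 := by
          by_contra hle
          push_neg at hle
          have : (2 : ℝ≥0∞) ≤ p s(0,1) + p s(1,2) := by
            rw [show (2:ℝ≥0∞) = 1 + 1 by norm_num]
            exact add_le_add h1.le hle
          exact absurd hA (not_lt.mpr this)
        have h23 : p s(1,2) + p s(2,3) ≤ 2 := by
          rw [show (2:ℝ≥0∞) = 1 + 1 by norm_num]
          exact add_le_add h2.le h3.le
        exact ⟨σ3, _, case3 h23 h1.le⟩

end Aux

lemma myG_deg (w : Fin 4) (inst : Fintype ↥(myG.neighborSet w)) :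
    @SimpleGraph.degree _ myG w inst ≤ 2 := by
  have h : @SimpleGraph.neighborFinset _ myG w inst
      = Finset.univ.filter (fun x => myG.Adj w x) := by
    ext x
    simp [SimpleGraph.mem_neighborFinset]
  show (@SimpleGraph.neighborFinset _ myG w inst).card ≤ 2
  rw [h]
  clear h inst
  fin_cases w <;> decide

lemma myG_isPathGraph : Tollbooth.IsPathGraph myG := by
  constructor
  · constructor
    · rw [SimpleGraph.connected_iff]
      exact ⟨by decide, by infer_instance⟩
    · rw [SimpleGraph.isAcyclic_iff_forall_adj_isBridge]
      intro a b hab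
      rw [SimpleGraph.isBridge_iff]
      revert hab; revert a b
      decide
  · intro w
    exact myG_deg w _

lemma myG_instance : Tollbooth.Instance myG QQ vv := by
  refine ⟨by norm_num, fun j => ⟨?_, ?_⟩⟩
  · fin_cases j <;> norm_num [vv]
  · fin_cases j
    · exact ⟨0, 1, SimpleGraph.Walk.cons (show myG.Adj 0 1 by decide) SimpleGraph.Walk.nil,
        by rw [SimpleGraph.Walk.isPath_def]; decide, by simp, by decide⟩
    · exact ⟨2, 3, SimpleGraph.Walk.cons (show myG.Adj 2 3 by decide) SimpleGraph.Walk.nil,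
        by rw [SimpleGraph.Walk.isPath_def]; decide, by simp, by decide⟩
    · exact ⟨0, 2, SimpleGraph.Walk.cons (show myG.Adj 0 1 by decide)
          (SimpleGraph.Walk.cons (show myG.Adj 1 2 by decide) SimpleGraph.Walk.nil),
        by rw [SimpleGraph.Walk.isPath_def]; decide, by simp, by decide⟩
    · exact ⟨1, 3, SimpleGraph.Walk.cons (show myG.Adj 1 2 by decide)
          (SimpleGraph.Walk.cons (show myG.Adj 2 3 by decide) SimpleGraph.Walk.nil),
        by rw [SimpleGraph.Walk.isPath_def]; decide, by simp, by decide⟩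

lemma myOPT : Tollbooth.OPT QQ vv = 3 := by
  unfold Tollbooth.OPT
  apply le_antisymm
  · apply Finset.sup_le
    intro S hS
    simp only [Finset.mem_filter] at hS
    fin_cases S
    all_goals try (exfalso; revert hS; decide)
    all_goals try (simp [vv, Finset.sum_insert, QQ]; try norm_num)
  · calc (3:NNReal) = ∑ j ∈ ({0,3} : Finset (Fin 4)), vv j := by
          rw [Finset.sum_pair (by decide)]; norm_num [vv, Matrix.cons_val_three]
      _ ≤ _ := Finset.le_sup (f := fun S => ∑ j ∈ S, vv j)
          (Finset.mem_filter.mpr ⟨Finset.mem_powerset.mpr (Finset.subset_univ _), by decide⟩)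



/-- There is a tollbooth instance on a path graph with three edges
`e1, e2, e3` and four buyers — buyer `0` demanding `{e1}` with value `1`, buyer `1`
demanding `{e3}` with value `1`, buyer `2` demanding `{e1,e2}` with value `2` and buyer `3`
demanding `{e2,e3}` with value `2` — with `OPT = 3`, such that for every item pricing `p`
there exist an arrival order `σ` and a tie-breaking choice `t` with `Wel(p,σ,t) ≤ 2`. -/
theorem path_no_tie_lower_bound :
    ∃ (V : Type) (iV : Fintype V) (dV : DecidableEq V) (G : SimpleGraph V)
      (Q : Fin 4 → Finset (Sym2 V)) (v : Fin 4 → ℝ≥0) (e1 e2 e3 : Sym2 V),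
      Tollbooth.IsPathGraph G ∧ Tollbooth.Instance G Q v ∧
        G.edgeFinset = {e1, e2, e3} ∧ e1 ≠ e2 ∧ e2 ≠ e3 ∧ e1 ≠ e3 ∧
        Q 0 = {e1} ∧ v 0 = 1 ∧ Q 1 = {e3} ∧ v 1 = 1 ∧
        Q 2 = {e1, e2} ∧ v 2 = 2 ∧ Q 3 = {e2, e3} ∧ v 3 = 2 ∧
        Tollbooth.OPT Q v = 3 ∧
        ∀ p : Sym2 V → ℝ≥0∞, ∃ (σ : Equiv.Perm (Fin 4)) (t : Fin 4 → Bool),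
          Tollbooth.Wel G p Q v σ t ≤ 2 := by
  refine ⟨Fin 4, inferInstance, inferInstance, myG, QQ, vv, s(0,1), s(1,2), s(2,3),
    myG_isPathGraph, myG_instance, myG_edgeFinset _, by decide, by decide, by decide,
    by decide, by norm_num [vv], by decide, by norm_num [vv],
    by decide, by norm_num [vv, Matrix.cons_val_two], by decide, by norm_num [vv, Matrix.cons_val_three],
    myOPT, main_bound⟩
end
end

section
/- For every ε > 0 and every tollbooth instance on a star graph, there exists an item pricing p such that for every arrival order σ and every tie-breaking choice t, Wel(p,σ,t) ≥ OPT/(2 + ε). (When the seller has no tie-breaking power, the competitive ratio of item pricing on stars is at most 2 + ε for every ε > 0.) -/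
open scoped Classical NNReal ENNReal

noncomputable section

namespace Tollbooth

variable {V : Type*} [Fintype V] [DecidableEq V]

section Aux

lemma walk_length_le_two' {V : Type*} {G : SimpleGraph V} {c a b : V}
    (W : G.Walk a b) (hW : W.IsPath) (hc : ∀ e ∈ W.edges, c ∈ e) : W.length ≤ 2 := by
  match W with
  | .nil => simp
  | .cons h .nil => simp
  | .cons h (.cons h' .nil) => simp
  | .cons (v := x) h1 (.cons (v := y) h2 (.cons (v := z) h3 W')) =>
    exfalso
    have hnd := hW.support_nodup
    simp [List.nodup_cons] at hnd
    have hz : z ∈ W'.support := W'.start_mem_support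
    have h1c : c ∈ s(a, x) := hc _ (by simp)
    have h2c : c ∈ s(x, y) := hc _ (by simp)
    have h3c : c ∈ s(y, z) := hc _ (by simp)
    rw [Sym2.mem_iff] at h1c h2c h3c
    obtain ⟨⟨hax, hay, haW⟩, ⟨hxy, hxW⟩, hyW⟩ := hnd
    rcases h2c with rfl | rfl <;> rcases h1c with h | h <;> rcases h3c with h' | h' <;>
      simp_all

variable {V : Type*} [Fintype V] [DecidableEq V] {n : ℕ}
  (p : Sym2 V → ℝ≥0∞) (Q : Fin n → Finset (Sym2 V)) (v : Fin n → ℝ≥0) (t : Fin n → Bool)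

lemma step_fst_subset (st : Finset (Sym2 V) × Finset (Fin n)) (j : Fin n) :
    (step p Q v t st j).1 ⊆ st.1 := by
  rw [step]; split_ifs with h
  · exact Finset.sdiff_subset
  · exact Finset.Subset.refl _

lemma foldl_fst_subset (l : List (Fin n)) (st : Finset (Sym2 V) × Finset (Fin n)) :
    (l.foldl (step p Q v t) st).1 ⊆ st.1 := by
  induction l generalizing st with
  | nil => exact Finset.Subset.refl _
  | cons a l ih => exact (ih _).trans (step_fst_subset p Q v t st a)

lemma foldl_not_subset {l : List (Fin n)} {j : Fin n} (hj : j ∈ l)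
    (hne : (Q j).Nonempty) (hlt : price p (Q j) < (v j : ℝ≥0∞))
    (st : Finset (Sym2 V) × Finset (Fin n)) :
    ¬ Q j ⊆ (l.foldl (step p Q v t) st).1 := by
  induction l generalizing st with
  | nil => simp at hj
  | cons a l ih =>
    rcases List.mem_cons.mp hj with rfl | hj'
    · by_cases hmem : j ∈ l
      · exact ih hmem _
      · have hstep : ¬ Q j ⊆ (step p Q v t st j).1 := by
          rw [step]; split_ifs with h
          · obtain ⟨e, he⟩ := hne
            intro hsub
            have := hsub he
            simp at this
            exact this.2 he
          · intro hsub
            exact h ⟨hsub, Or.inl hlt⟩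
        intro hsub
        exact hstep (hsub.trans (foldl_fst_subset p Q v t l _))
    · exact ih hj' _

/-- The running invariant of the selling process. -/
def Inv (G : SimpleGraph V) (st : Finset (Sym2 V) × Finset (Fin n)) : Prop :=
  st.1 = G.edgeFinset \ st.2.biUnion Q ∧
  (∀ k ∈ st.2, price p (Q k) ≤ (v k : ℝ≥0∞)) ∧
  (st.2 : Set (Fin n)).Pairwise fun a b => Disjoint (Q a) (Q b)

lemma inv_step (G : SimpleGraph V) (st : Finset (Sym2 V) × Finset (Fin n)) (j : Fin n)
    (h : Inv p Q v G st) : Inv p Q v G (step p Q v t st j) := by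
  obtain ⟨h1, h2, h3⟩ := h
  rw [step]; split_ifs with hc
  · obtain ⟨hsub, hpr⟩ := hc
    have hdisj : ∀ k ∈ st.2, Disjoint (Q j) (Q k) := by
      intro k hk
      rw [Finset.disjoint_left]
      intro e he hek
      have := hsub he
      rw [h1, Finset.mem_sdiff] at this
      exact this.2 (Finset.mem_biUnion.mpr ⟨k, hk, hek⟩)
    refine ⟨?_, ?_, ?_⟩
    · simp only [Finset.biUnion_insert, h1]
      ext e; simp; tauto
    · intro k hk
      rcases Finset.mem_insert.mp hk with rfl | hk'
      · rcases hpr with h' | h'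
        · exact le_of_lt h'
        · exact le_of_eq h'.1
      · exact h2 k hk'
    · rw [Finset.coe_insert]
      refine Set.Pairwise.insert h3 ?_
      intro k hk _
      exact ⟨hdisj k hk, (hdisj k hk).symm⟩
  · exact ⟨h1, h2, h3⟩

lemma inv_foldl (G : SimpleGraph V) (l : List (Fin n)) (st : Finset (Sym2 V) × Finset (Fin n))
    (h : Inv p Q v G st) : Inv p Q v G (l.foldl (step p Q v t) st) := by
  induction l generalizing st with
  | nil => exact h
  | cons a l ih => exact ih _ (inv_step p Q v t G st a h)

end Aux

end Tollbooth

/-- For every `ε > 0` and every tollbooth instance on a star graph, there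
exists an item pricing `p` such that for every arrival order `σ` and every tie-breaking
choice `t`, `Wel(p,σ,t) ≥ OPT/(2 + ε)`. -/
theorem star_no_tie_gap_le_two_add_eps {V : Type*} [Fintype V] [DecidableEq V]
    (ε : ℝ≥0) (hε : 0 < ε)
    (G : SimpleGraph V) (hG : Tollbooth.IsStar G)
    {n : ℕ} (Q : Fin n → Finset (Sym2 V)) (v : Fin n → ℝ≥0)
    (hI : Tollbooth.Instance G Q v) :
    ∃ p : Sym2 V → ℝ≥0∞, ∀ (σ : Equiv.Perm (Fin n)) (t : Fin n → Bool),
      Tollbooth.OPT Q v / (2 + ε) ≤ Tollbooth.Wel G p Q v σ t := by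
  classical
  obtain ⟨hn, hjv⟩ := hI
  obtain ⟨htree, c, hc⟩ := hG
  -- basic facts about the demand paths
  have Qne : ∀ j, (Q j).Nonempty := by
    intro j
    obtain ⟨a, b, W, hW, hne, hQ⟩ := (hjv j).2
    obtain ⟨e, he⟩ := List.exists_mem_of_ne_nil _ hne
    exact ⟨e, by rw [hQ]; exact List.mem_toFinset.mpr he⟩
  have Qsub : ∀ j, Q j ⊆ G.edgeFinset := by
    intro j
    obtain ⟨a, b, W, hW, hne, hQ⟩ := (hjv j).2
    intro e he
    rw [hQ, List.mem_toFinset] at he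
    exact SimpleGraph.mem_edgeFinset.mpr (W.edges_subset_edgeSet he)
  have Qcard : ∀ j, (Q j).card ≤ 2 := by
    intro j
    obtain ⟨a, b, W, hW, hne, hQ⟩ := (hjv j).2
    have hlen : W.length ≤ 2 :=
      Tollbooth.walk_length_le_two' W hW fun e he => hc e (W.edges_subset_edgeSet he)
    calc (Q j).card ≤ W.edges.length := by rw [hQ]; exact W.edges.toFinset_card_le
      _ = W.length := W.length_edges
      _ ≤ 2 := hlen
  -- an optimal set of buyers
  set F := (Finset.univ.powerset.filter fun S : Finset (Fin n) =>
      (S : Set (Fin n)).Pairwise fun j k => Disjoint (Q j) (Q k)) with hF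
  have hFne : F.Nonempty := ⟨∅, by simp [hF]⟩
  obtain ⟨S, hSmem, hSopt⟩ := F.exists_mem_eq_sup hFne fun S => ∑ j ∈ S, v j
  have hSpair : (S : Set (Fin n)).Pairwise fun j k => Disjoint (Q j) (Q k) :=
    (Finset.mem_filter.mp hSmem).2
  -- the pricing
  set D : ℝ≥0∞ := 2 + (ε : ℝ≥0∞) with hD
  have hD0 : D ≠ 0 := by simp [hD]
  have hDtop : D ≠ ⊤ := by simp [hD]
  set p : Sym2 V → ℝ≥0∞ := fun e =>
    if h : ∃ j, j ∈ S ∧ e ∈ Q j then ((v h.choose : ℝ≥0∞) / D) else 0 with hp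
  have hp_eq : ∀ j ∈ S, ∀ e ∈ Q j, p e = (v j : ℝ≥0∞) / D := by
    intro j hj e he
    have hex : ∃ j, j ∈ S ∧ e ∈ Q j := ⟨j, hj, he⟩
    have hspec := hex.choose_spec
    have : hex.choose = j := by
      by_contra hne
      exact Finset.disjoint_left.mp (hSpair hspec.1 hj hne) hspec.2 he
    simp only [hp, dif_pos hex, this]
  -- every optimal buyer's path is strictly cheaper than her value
  have hprice : ∀ j ∈ S, Tollbooth.price p (Q j) < (v j : ℝ≥0∞) := by
    intro j hj
    have h1 : Tollbooth.price p (Q j) = (Q j).card • ((v j : ℝ≥0∞) / D) := by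
      rw [Tollbooth.price, Finset.sum_congr rfl fun e he => hp_eq j hj e he,
        Finset.sum_const]
    rw [h1, nsmul_eq_mul]
    have h2 : ((Q j).card : ℝ≥0∞) * ((v j : ℝ≥0∞) / D) ≤ 2 * ((v j : ℝ≥0∞) / D) := by
      apply mul_le_mul_left
      exact_mod_cast Nat.cast_le.mpr (Qcard j)
    refine lt_of_le_of_lt h2 ?_
    rw [← mul_div_assoc, ENNReal.div_lt_iff (Or.inl hD0) (Or.inl hDtop)]
    have hv0 : (v j : ℝ≥0∞) ≠ 0 := by exact_mod_cast (hjv j).1.ne'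
    calc 2 * (v j : ℝ≥0∞) = (v j : ℝ≥0∞) * 2 := mul_comm _ _
      _ < (v j : ℝ≥0∞) * 2 + (v j : ℝ≥0∞) * ε :=
          ENNReal.lt_add_right (by finiteness)
            (mul_ne_zero hv0 (by exact_mod_cast hε.ne'))
      _ = (v j : ℝ≥0∞) * D := by rw [hD, mul_add]
  refine ⟨p, fun σ t => ?_⟩
  -- run the process
  set l : List (Fin n) := List.ofFn fun i => σ i with hl
  set fin := l.foldl (Tollbooth.step p Q v t) (G.edgeFinset, ∅) with hfin
  have hInv : Tollbooth.Inv p Q v G fin :=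
    Tollbooth.inv_foldl p Q v t G l _ ⟨by simp, by simp, by simp⟩
  obtain ⟨hfin1, hfin2, hfin3⟩ := hInv
  set P := fin.2 with hP
  -- every optimal buyer loses at least one edge of her path
  have hsold : ∀ j ∈ S, ∃ e ∈ Q j, e ∈ P.biUnion Q := by
    intro j hj
    have hjl : j ∈ l := by
      rw [hl, List.mem_ofFn]
      exact ⟨σ⁻¹ j, by simp⟩
    have := Tollbooth.foldl_not_subset p Q v t hjl (Qne j) (hprice j hj)
      (G.edgeFinset, ∅)
    rw [← hfin] at this
    obtain ⟨e, he, hne⟩ := Finset.not_subset.mp this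
    refine ⟨e, he, ?_⟩
    have heE : e ∈ G.edgeFinset := Qsub j he
    rw [hfin1, Finset.mem_sdiff] at hne
    tauto
  have hV : Nonempty (Sym2 V) := ⟨(Qne ⟨0, hn⟩).choose⟩
  set f : Fin n → Sym2 V := fun j =>
    if h : ∃ e ∈ Q j, e ∈ P.biUnion Q then h.choose else Classical.arbitrary _ with hf
  have hfmem : ∀ j ∈ S, f j ∈ Q j ∧ f j ∈ P.biUnion Q := by
    intro j hj
    have hex := hsold j hj
    simpa only [hf, dif_pos hex] using hex.choose_spec
  have hfinj : ∀ x ∈ S, ∀ y ∈ S, f x = f y → x = y := by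
    intro x hx y hy hxy
    by_contra hne
    exact Finset.disjoint_left.mp (hSpair hx hy hne) (hfmem x hx).1
      (hxy ▸ (hfmem y hy).1)
  -- the main chain of inequalities, in ℝ≥0∞
  have H : (Tollbooth.OPT Q v : ℝ≥0∞) / D ≤ (Tollbooth.Wel G p Q v σ t : ℝ≥0∞) := by
    have hOPT : Tollbooth.OPT Q v = ∑ j ∈ S, v j := hSopt
    calc (Tollbooth.OPT Q v : ℝ≥0∞) / D
        = (∑ j ∈ S, (v j : ℝ≥0∞)) / D := by rw [hOPT]; push_cast; rfl
      _ = ∑ j ∈ S, (v j : ℝ≥0∞) / D := by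
          simp only [div_eq_mul_inv, Finset.sum_mul]
      _ = ∑ j ∈ S, p (f j) :=
          Finset.sum_congr rfl fun j hj => (hp_eq j hj _ (hfmem j hj).1).symm
      _ = ∑ e ∈ S.image f, p e := (Finset.sum_image hfinj).symm
      _ ≤ ∑ e ∈ P.biUnion Q, p e := by
          apply Finset.sum_le_sum_of_subset
          intro e he
          obtain ⟨j, hj, rfl⟩ := Finset.mem_image.mp he
          exact (hfmem j hj).2
      _ = ∑ k ∈ P, Tollbooth.price p (Q k) := Finset.sum_biUnion hfin3
      _ ≤ ∑ k ∈ P, (v k : ℝ≥0∞) := Finset.sum_le_sum fun k hk => hfin2 k hk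
      _ = (Tollbooth.Wel G p Q v σ t : ℝ≥0∞) := by
          rw [Tollbooth.Wel, Tollbooth.purchased]
          push_cast
          rfl
  -- back to ℝ≥0
  rw [← ENNReal.coe_le_coe, ENNReal.coe_div (by positivity)]
  have h2e : ((2 + ε : ℝ≥0) : ℝ≥0∞) = D := by rw [hD]; push_cast; rfl
  rw [h2e]
  exact H
end
end

section
/- Let G be a finite simple graph. Every extreme point y of the fractional matching polytope P(G) is half-integral, i.e., y(e) ∈ {0, 1/2, 1} for every edge e; moreover, the subgraph of G spanned by the edges e with y(e) = 1/2 has every connected component equal to a cycle of odd length. -/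
open scoped Classical

noncomputable section

set_option linter.unusedSectionVars false
set_option linter.unusedVariables false
set_option linter.unnecessarySeqFocus false

/-- Membership in the fractional matching polytope `P(G)` of `G` : `y` is supported on the
edges of `G`, is nonnegative, and for every vertex the total weight of the incident edges is
at most `1`. -/
def InFracMatchingPolytope {V : Type*} [Fintype V] [DecidableEq V]
    (G : SimpleGraph V) (y : Sym2 V → ℝ) : Prop :=
  (∀ e, e ∉ G.edgeSet → y e = 0) ∧ (∀ e, 0 ≤ y e) ∧
    ∀ w : V, ∑ e ∈ G.edgeFinset.filter (fun e => w ∈ e), y e ≤ 1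


namespace FMAux

open SimpleGraph Walk

variable {V : Type*}

/-- Alternating ±1 edge weights along a walk. -/
def wd {G : SimpleGraph V} : {a b : V} → G.Walk a b → Sym2 V → ℝ
  | _, _, .nil => fun _ => 0
  | _, _, .cons (u := a) (v := c) _ p => fun e => (if e = s(a, c) then 1 else 0) - wd p e

@[simp] lemma wd_nil {G : SimpleGraph V} {a : V} (e : Sym2 V) :
    wd (.nil : G.Walk a a) e = 0 := rfl

@[simp] lemma wd_cons {G : SimpleGraph V} {a c b : V} (h : G.Adj a c) (p : G.Walk c b)
    (e : Sym2 V) : wd (.cons h p) e = (if e = s(a, c) then 1 else 0) - wd p e := rfl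

lemma wd_eq_zero_of_not_mem {G : SimpleGraph V} {a b : V} (p : G.Walk a b) {e : Sym2 V}
    (he : e ∉ p.edges) : wd p e = 0 := by
  induction p with
  | nil => simp
  | cons h p ih =>
    rw [edges_cons] at he
    simp only [List.mem_cons, not_or] at he
    simp [wd_cons, he.1, ih he.2]

lemma wd_ne_zero {G : SimpleGraph V} {a b : V} {p : G.Walk a b} (hp : p.IsTrail) {e : Sym2 V}
    (he : e ∈ p.edges) : wd p e ≠ 0 := by
  induction p with
  | @cons a c b h p ih =>
    rw [edges_cons] at he
    have hn := hp.edges_nodup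
    rw [edges_cons, List.nodup_cons] at hn
    rcases List.mem_cons.mp he with rfl | he'
    · rw [wd_cons, if_pos rfl, wd_eq_zero_of_not_mem p hn.1]; norm_num
    · have hne : e ≠ s(a, c) := by rintro rfl; exact hn.1 he'
      rw [wd_cons, if_neg hne, zero_sub, neg_ne_zero]
      exact ih (hp.of_cons) he'
  | nil => simp at he

lemma wd_append {G : SimpleGraph V} {a b c : V} (p : G.Walk a b) (q : G.Walk b c) (e : Sym2 V) :
    wd (p.append q) e = wd p e + (-1 : ℝ) ^ p.length * wd q e := by
  induction p with
  | nil => simp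
  | cons h p ih =>
    rw [cons_append, wd_cons, wd_cons, ih, length_cons, pow_succ]
    ring

lemma wd_reverse {G : SimpleGraph V} {a b : V} (p : G.Walk a b) (e : Sym2 V) :
    wd p.reverse e = (-1 : ℝ) ^ (p.length + 1) * wd p e := by
  induction p with
  | nil => simp
  | @cons a c b h p ih =>
    rw [reverse_cons, wd_append, ih, length_reverse, length_cons, wd_cons]
    simp only [wd_cons, wd_nil, sub_zero]
    rw [show (s(c, a) : Sym2 V) = s(a, c) from Sym2.eq_swap]
    rw [pow_succ, pow_succ]
    ring

lemma wd_master {G : SimpleGraph V} [Fintype V] [DecidableEq V] {a b : V} (p : G.Walk a b) (v : V) :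
    ∑ e : Sym2 V, (if v ∈ e then wd p e else 0)
      = (if a = v then (1 : ℝ) else 0) - (-1 : ℝ) ^ p.length * (if b = v then 1 else 0) := by
  induction p with
  | nil => simp
  | @cons a c b h p ih =>
    have hac : a ≠ c := G.ne_of_adj h
    have hsplit : ∀ e : Sym2 V, (if v ∈ e then wd (Walk.cons h p) e else 0)
        = (if v ∈ e then (if e = s(a, c) then (1 : ℝ) else 0) else 0)
          - (if v ∈ e then wd p e else 0) := by
      intro e
      by_cases hv : v ∈ e <;> simp [hv, wd_cons]
    rw [Finset.sum_congr rfl (fun e _ => hsplit e), Finset.sum_sub_distrib, ih]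
    have h1 : ∑ e : Sym2 V, (if v ∈ e then (if e = s(a, c) then (1 : ℝ) else 0) else 0)
        = if v ∈ (s(a, c) : Sym2 V) then (1 : ℝ) else 0 := by
      calc ∑ e : Sym2 V, (if v ∈ e then (if e = s(a, c) then (1 : ℝ) else 0) else 0)
          = ∑ e : Sym2 V, (if e = s(a, c) then (if v ∈ e then (1 : ℝ) else 0) else 0) :=
            Finset.sum_congr rfl (fun e _ => by split_ifs <;> simp_all)
        _ = if v ∈ (s(a, c) : Sym2 V) then (1 : ℝ) else 0 := by
            rw [Finset.sum_ite_eq' Finset.univ (s(a, c) : Sym2 V)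
              (fun e => if v ∈ e then (1 : ℝ) else 0)]
            simp
    rw [h1]
    have h2 : (if v ∈ (s(a, c) : Sym2 V) then (1 : ℝ) else 0)
        = (if a = v then (1 : ℝ) else 0) + (if c = v then 1 else 0) := by
      by_cases h1 : a = v <;> by_cases h2 : c = v <;>
        simp_all [Sym2.mem_iff] <;> tauto
    rw [h2, length_cons, pow_succ]
    ring

section Main

variable {V : Type*} [Fintype V] [DecidableEq V]

/-- An edge is fractional if it is a `G`-edge with value strictly between 0 and 1. -/
def frac (G : SimpleGraph V) (y : Sym2 V → ℝ) (e : Sym2 V) : Prop :=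
  e ∈ G.edgeSet ∧ 0 < y e ∧ y e < 1

/-- The graph of fractional edges. -/
def Hf (G : SimpleGraph V) (y : Sym2 V → ℝ) : SimpleGraph V :=
  SimpleGraph.fromEdgeSet {e | frac G y e}

/-- A vertex is tight if its constraint is met with equality. -/
def tight (G : SimpleGraph V) (y : Sym2 V → ℝ) (v : V) : Prop :=
  ∑ e ∈ G.edgeFinset.filter (fun e => v ∈ e), y e = 1

variable {G : SimpleGraph V} {y : Sym2 V → ℝ}

lemma Hf_le (hy : InFracMatchingPolytope G y) : Hf G y ≤ G := by
  intro a b h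
  rw [Hf, SimpleGraph.fromEdgeSet_adj] at h
  exact (SimpleGraph.mem_edgeSet G).mp h.1.1

lemma frac_of_adj {a b : V} (h : (Hf G y).Adj a b) : frac G y s(a, b) := by
  rw [Hf, SimpleGraph.fromEdgeSet_adj] at h
  exact h.1

lemma frac_of_mem_edges {a b : V} {p : (Hf G y).Walk a b} {e : Sym2 V}
    (he : e ∈ p.edges) : frac G y e := by
  have := p.edges_subset_edgeSet he
  rw [Hf, SimpleGraph.edgeSet_fromEdgeSet] at this
  exact this.1

lemma adj_of_frac {e : Sym2 V} (hf : frac G y e) {v : V} (hv : v ∈ e) :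
    ∃ w, (Hf G y).Adj v w ∧ e = s(v, w) := by
  obtain ⟨w, rfl⟩ := Sym2.mem_iff_exists.mp hv
  refine ⟨w, ?_, rfl⟩
  rw [Hf, SimpleGraph.fromEdgeSet_adj]
  refine ⟨hf, ?_⟩
  rintro rfl
  exact (G.irrefl) ((SimpleGraph.mem_edgeSet G).mp hf.1)

lemma y_le_one (hy : InFracMatchingPolytope G y) {e : Sym2 V} (he : e ∈ G.edgeSet) :
    y e ≤ 1 := by
  induction e using Sym2.ind with
  | _ a b =>
    refine le_trans ?_ (hy.2.2 a)
    apply Finset.single_le_sum (fun e _ => hy.2.1 e)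
    simp [SimpleGraph.mem_edgeFinset, he]

lemma sum_lt_of_not_tight (hy : InFracMatchingPolytope G y) {z : V} (hz : ¬ tight G y z) :
    ∑ e ∈ G.edgeFinset.filter (fun e => z ∈ e), y e < 1 :=
  lt_of_le_of_ne (hy.2.2 z) hz

lemma sum_bridge (δ : Sym2 V → ℝ) (hsupp : ∀ e, e ∉ G.edgeSet → δ e = 0) (z : V) :
    ∑ e ∈ G.edgeFinset.filter (fun e => z ∈ e), δ e
      = ∑ e : Sym2 V, (if z ∈ e then δ e else 0) := by
  rw [← Finset.sum_filter]
  apply Finset.sum_subset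
  · intro e he
    simp only [Finset.mem_filter] at he ⊢
    exact ⟨Finset.mem_univ _, he.2⟩
  · intro e he hne
    simp only [Finset.mem_filter, SimpleGraph.mem_edgeFinset] at he hne
    exact hsupp e (fun hmem => hne ⟨hmem, he.2⟩)

/-- The key consequence of extremality: there is no nonzero perturbation direction
supported on fractional edges whose incident sums vanish at all tight vertices. -/
lemma kernel (hy : InFracMatchingPolytope G y)
    (hext : ∀ y' y'', InFracMatchingPolytope G y' → InFracMatchingPolytope G y'' →
      (∀ e, y e = (y' e + y'' e) / 2) → y' = y'')
    (δ : Sym2 V → ℝ)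
    (hsupp : ∀ e, ¬ frac G y e → δ e = 0)
    (hsum : ∀ z, tight G y z → ∑ e : Sym2 V, (if z ∈ e then δ e else 0) = 0) :
    δ = 0 := by
  classical
  set Sy : V → ℝ := fun z => ∑ e ∈ G.edgeFinset.filter (fun e => z ∈ e), y e with hSy
  set Sδ : V → ℝ := fun z => ∑ e ∈ G.edgeFinset.filter (fun e => z ∈ e), δ e with hSδ
  have hsupp' : ∀ e, e ∉ G.edgeSet → δ e = 0 := fun e he => hsupp e (fun hf => he hf.1)
  have hδfrac : ∀ e, δ e ≠ 0 → frac G y e := by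
    intro e he; by_contra hf; exact he (hsupp e hf)
  have hSδtight : ∀ z, tight G y z → Sδ z = 0 := by
    intro z hz; rw [hSδ]; simp only
    rw [sum_bridge δ hsupp' z]; exact hsum z hz
  set S : Finset ℝ := insert 1
    (((Finset.univ.filter (fun e : Sym2 V => δ e ≠ 0)).image (fun e => y e / |δ e|)) ∪
      ((Finset.univ.filter (fun z : V => ¬ tight G y z ∧ Sδ z ≠ 0)).image
        (fun z => (1 - Sy z) / |Sδ z|))) with hS
  have hSne : S.Nonempty := ⟨1, Finset.mem_insert_self _ _⟩
  set t : ℝ := S.min' hSne with ht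
  have htpos : 0 < t := by
    rw [ht, Finset.lt_min'_iff]
    intro x hx
    rw [hS] at hx
    rcases Finset.mem_insert.mp hx with rfl | hx
    · norm_num
    rcases Finset.mem_union.mp hx with hx | hx
    · obtain ⟨e, he, rfl⟩ := Finset.mem_image.mp hx
      rw [Finset.mem_filter] at he
      have hf := hδfrac e he.2
      exact div_pos hf.2.1 (abs_pos.mpr he.2)
    · obtain ⟨z, hz, rfl⟩ := Finset.mem_image.mp hx
      rw [Finset.mem_filter] at hz
      have h1 : Sy z < 1 := sum_lt_of_not_tight hy hz.2.1
      exact div_pos (by linarith) (abs_pos.mpr hz.2.2)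
  have hedge : ∀ e, t * |δ e| ≤ y e := by
    intro e
    by_cases h0 : δ e = 0
    · rw [h0]; simp; exact (hy.2.1 e)
    · have hmem : y e / |δ e| ∈ S := by
        rw [hS]
        apply Finset.mem_insert_of_mem
        apply Finset.mem_union_left
        exact Finset.mem_image.mpr ⟨e, by simp [h0], rfl⟩
      have := Finset.min'_le S _ hmem
      rw [← ht] at this
      have habs : (0:ℝ) < |δ e| := abs_pos.mpr h0
      calc t * |δ e| ≤ (y e / |δ e|) * |δ e| := by
            exact mul_le_mul_of_nonneg_right this (le_of_lt habs)
        _ = y e := by field_simp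
  have hvert : ∀ z, ¬ tight G y z → t * |Sδ z| ≤ 1 - Sy z := by
    intro z hz
    by_cases h0 : Sδ z = 0
    · rw [h0]; simp
      have := sum_lt_of_not_tight hy hz
      linarith
    · have hmem : (1 - Sy z) / |Sδ z| ∈ S := by
        rw [hS]
        apply Finset.mem_insert_of_mem
        apply Finset.mem_union_right
        exact Finset.mem_image.mpr ⟨z, by simp [hz, h0], rfl⟩
      have := Finset.min'_le S _ hmem
      rw [← ht] at this
      have habs : (0:ℝ) < |Sδ z| := abs_pos.mpr h0
      calc t * |Sδ z| ≤ ((1 - Sy z) / |Sδ z|) * |Sδ z| :=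
            mul_le_mul_of_nonneg_right this (le_of_lt habs)
        _ = 1 - Sy z := by field_simp
  have hmem : ∀ (s : ℝ), |s| = t → InFracMatchingPolytope G (fun e => y e + s * δ e) := by
    intro s hs
    have hsabs : ∀ x : ℝ, s * x ≤ t * |x| := by
      intro x
      calc s * x ≤ |s * x| := le_abs_self _
        _ = |s| * |x| := abs_mul s x
        _ = t * |x| := by rw [hs]
    refine ⟨?_, ?_, ?_⟩
    · intro e he
      show y e + s * δ e = 0
      rw [hsupp' e he, hy.1 e he]; ring
    · intro e
      show 0 ≤ y e + s * δ e
      have h1 : s * (- δ e) ≤ t * |δ e| := by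
        have := hsabs (- δ e); rwa [abs_neg] at this
      have := hedge e
      have h2 : - (s * δ e) ≤ y e := by
        rw [← mul_neg] at *; linarith
      linarith
    · intro z
      show ∑ e ∈ G.edgeFinset.filter (fun e => z ∈ e), (y e + s * δ e) ≤ 1
      have hsum_eq : ∑ e ∈ G.edgeFinset.filter (fun e => z ∈ e), (y e + s * δ e)
          = Sy z + s * Sδ z := by
        rw [Finset.sum_add_distrib, ← Finset.mul_sum]
      rw [hsum_eq]
      by_cases hz : tight G y z
      · rw [hSδtight z hz, mul_zero, add_zero]
        exact le_of_eq hz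
      · have h1 : s * Sδ z ≤ t * |Sδ z| := hsabs (Sδ z)
        have := hvert z hz
        linarith
  have heq := hext _ _ (hmem t (abs_of_pos htpos)) (hmem (-t) (by rw [abs_neg, abs_of_pos htpos]))
    (fun e => by ring)
  funext e
  have hce := congrFun heq e
  have h2' : 2 * (t * δ e) = 0 := by linarith
  have h2 : t * δ e = 0 := by linarith
  rcases mul_eq_zero.mp h2 with h | h
  · exact absurd h (ne_of_gt htpos)
  · exact h

variable (hy : InFracMatchingPolytope G y)
  (hext : ∀ y' y'', InFracMatchingPolytope G y' → InFracMatchingPolytope G y'' →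
    (∀ e, y e = (y' e + y'' e) / 2) → y' = y'')

lemma exists_first_edge {a b : V} (p : (Hf G y).Walk a b) (hl : 0 < p.length) :
    ∃ e, e ∈ p.edges := by
  have : p.edges ≠ [] := by
    intro h
    have := p.length_edges
    rw [h] at this
    simp at this
    omega
  exact ⟨p.edges.head this, List.head_mem this⟩

include hy hext

/-- Applying the kernel lemma to the alternating vector of a walk. -/
lemma no_good_walk {a b : V} (W : (Hf G y).Walk a b)
    (hsum : ∀ z, tight G y z →
      (if a = z then (1:ℝ) else 0) - (-1:ℝ) ^ W.length * (if b = z then 1 else 0) = 0)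
    {e : Sym2 V} (he : wd W e ≠ 0) : False := by
  have h0 : wd W = 0 := by
    apply kernel hy hext
    · intro e hf
      apply wd_eq_zero_of_not_mem
      intro hmem
      exact hf (frac_of_mem_edges hmem)
    · intro z hz
      rw [wd_master W z]
      exact hsum z hz
  rw [h0] at he
  exact he rfl

/-- No nonempty closed trail of even length. -/
lemma K1 {a : V} (W : (Hf G y).Walk a a) (ht : W.IsTrail) (hl : 0 < W.length)
    (hev : Even W.length) : False := by
  obtain ⟨e, he⟩ := exists_first_edge W hl
  apply no_good_walk hy hext W _ (wd_ne_zero ht he)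
  intro z hz
  rw [hev.neg_one_pow]
  ring

/-- No nonempty trail with both endpoints non-tight. -/
lemma K2 {a b : V} (W : (Hf G y).Walk a b) (ht : W.IsTrail) (hl : 0 < W.length)
    (ha : ¬ tight G y a) (hb : ¬ tight G y b) : False := by
  obtain ⟨e, he⟩ := exists_first_edge W hl
  apply no_good_walk hy hext W _ (wd_ne_zero ht he)
  intro z hz
  have h1 : a ≠ z := by rintro rfl; exact ha hz
  have h2 : b ≠ z := by rintro rfl; exact hb hz
  rw [if_neg h1, if_neg h2]
  ring

/-- Dumbbell I : odd closed trail reached by a path from a non-tight vertex. -/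
lemma D1 {u x : V} (hu : ¬ tight G y u) (P0 : (Hf G y).Walk x u) (C0 : (Hf G y).Walk x x)
    (hP : P0.IsTrail) (hC : C0.IsTrail) (hPl : 0 < P0.length)
    (hCodd : Odd C0.length) (hdisj : ∀ e ∈ P0.edges, e ∉ C0.edges) : False := by
  set W : (Hf G y).Walk u u := P0.reverse.append (C0.append P0) with hW
  obtain ⟨e, he⟩ := exists_first_edge P0 hPl
  have hwdC : wd C0 e = 0 := wd_eq_zero_of_not_mem _ (hdisj e he)
  have hwdP : wd P0 e ≠ 0 := wd_ne_zero hP he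
  have hwd : wd W e = 2 * (-1:ℝ) ^ (P0.length + 1) * wd P0 e := by
    rw [hW, wd_append, wd_append, wd_reverse, hwdC, SimpleGraph.Walk.length_reverse,
      hCodd.neg_one_pow]
    ring
  apply no_good_walk hy hext W _ (by rw [hwd]; exact mul_ne_zero (mul_ne_zero (by norm_num) (pow_ne_zero _ (by norm_num))) hwdP)
  intro z hz
  have h1 : u ≠ z := by rintro rfl; exact hu hz
  rw [if_neg h1]
  ring

omit hy hext in
lemma trail_append {a b c : V} {p : (Hf G y).Walk a b} {q : (Hf G y).Walk b c}
    (hp : p.IsTrail) (hq : q.IsTrail) (hd : ∀ e ∈ p.edges, e ∉ q.edges) :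
    (p.append q).IsTrail := by
  rw [SimpleGraph.Walk.isTrail_def, SimpleGraph.Walk.edges_append, List.nodup_append]
  exact ⟨hp.edges_nodup, hq.edges_nodup, fun e he e' he' h => hd e he (h ▸ he')⟩

omit hy hext in
lemma trail_split {a b c : V} {p : (Hf G y).Walk a b} {q : (Hf G y).Walk b c}
    (h : (p.append q).IsTrail) :
    p.IsTrail ∧ q.IsTrail ∧ ∀ e ∈ p.edges, e ∉ q.edges := by
  have := h.edges_nodup
  rw [SimpleGraph.Walk.edges_append, List.nodup_append] at this
  exact ⟨(SimpleGraph.Walk.isTrail_def _).mpr this.1,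
    (SimpleGraph.Walk.isTrail_def _).mpr this.2.1, fun e he he' => this.2.2 e he e he' rfl⟩

/-- Dumbbell II : two odd closed trails joined by a trail. -/
lemma D2 {z x : V} (C0 : (Hf G y).Walk z z) (P0 : (Hf G y).Walk x z)
    (C1 : (Hf G y).Walk x x)
    (hC0 : C0.IsTrail) (hP0 : P0.IsTrail) (hC1 : C1.IsTrail)
    (hC0odd : Odd C0.length) (hC1odd : Odd C1.length)
    (dC0P : ∀ e ∈ C0.edges, e ∉ P0.edges)
    (dC0C1 : ∀ e ∈ C0.edges, e ∉ C1.edges) : False := by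
  set W : (Hf G y).Walk z z := C0.append (P0.reverse.append (C1.append P0)) with hW
  obtain ⟨e, he⟩ := exists_first_edge C0 hC0odd.pos
  have h1 : wd P0 e = 0 := wd_eq_zero_of_not_mem _ (dC0P e he)
  have h2 : wd P0.reverse e = 0 := by
    rw [wd_reverse, h1, mul_zero]
  have h3 : wd C1 e = 0 := wd_eq_zero_of_not_mem _ (dC0C1 e he)
  have hwd : wd W e = wd C0 e := by
    rw [hW, wd_append, wd_append, wd_append, h1, h2, h3]
    ring
  have hlen : Even W.length := by
    rw [hW]
    simp only [SimpleGraph.Walk.length_append, SimpleGraph.Walk.length_reverse]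
    obtain ⟨k, hk⟩ := hC0odd
    obtain ⟨m, hm⟩ := hC1odd
    refine ⟨C0.length / 2 + P0.length + (C1.length + 1) / 2 + 1 - 1 + 0, by omega⟩
  apply no_good_walk hy hext W _ (by rw [hwd]; exact wd_ne_zero hC0 he)
  intro w hw
  rw [hlen.neg_one_pow]
  ring

/-- Theta configuration : an odd closed trail plus a disjoint trail between
two of its vertices. -/
lemma Theta {z x : V} (C0 : (Hf G y).Walk z z) (q : (Hf G y).Walk x z)
    (hC0 : C0.IsTrail) (hq : q.IsTrail) (hC0odd : Odd C0.length) (hql : 0 < q.length)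
    (hx : x ∈ C0.support) (hdisj : ∀ e ∈ q.edges, e ∉ C0.edges) : False := by
  set A := C0.takeUntil x hx with hA
  set B := C0.dropUntil x hx with hB
  have hspec : A.append B = C0 := C0.take_spec hx
  have hCedges : C0.edges = A.edges ++ B.edges := by
    rw [← hspec, SimpleGraph.Walk.edges_append]
  have hsplit := trail_split (p := A) (q := B) (by rwa [hspec])
  have hAq : ∀ e ∈ A.edges, e ∈ C0.edges := fun e he => by
    rw [hCedges]; exact List.mem_append_left _ he
  have hBq : ∀ e ∈ B.edges, e ∈ C0.edges := fun e he => by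
    rw [hCedges]; exact List.mem_append_right _ he
  have hlen : A.length + B.length = C0.length := by
    have := congrArg SimpleGraph.Walk.length hspec
    rwa [SimpleGraph.Walk.length_append] at this
  -- W1 = B ++ q.reverse, W2 = q ++ A, both closed at x
  have hW1t : (B.append q.reverse).IsTrail := by
    apply trail_append hsplit.2.1 hq.reverse
    intro e he hrev
    rw [SimpleGraph.Walk.edges_reverse, List.mem_reverse] at hrev
    exact hdisj e hrev (hBq e he)
  have hW2t : (q.append A).IsTrail := by
    apply trail_append hq hsplit.1
    intro e he hA'
    exact hdisj e he (hAq e hA')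
  obtain ⟨k, hk⟩ := hC0odd
  rcases Nat.even_or_odd (B.append q.reverse).length with hev | hodd
  · exact K1 hy hext _ hW1t (by
      simp only [SimpleGraph.Walk.length_append, SimpleGraph.Walk.length_reverse]; omega) hev
  · have hev2 : Even (q.append A).length := by
      simp only [SimpleGraph.Walk.length_append] at hodd ⊢
      rw [SimpleGraph.Walk.length_reverse] at hodd
      rw [Nat.odd_iff] at hodd
      rw [Nat.even_iff]
      omega
    exact K1 hy hext _ hW2t (by
      simp only [SimpleGraph.Walk.length_append]; omega) hev2

omit hy hext in
lemma mem_fracInc {v : V} {e : Sym2 V} :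
    e ∈ Finset.univ.filter (fun e => frac G y e ∧ v ∈ e) ↔ frac G y e ∧ v ∈ e := by
  simp

include hy in
omit hext in
lemma frac_sum_one {v : V} (hv : tight G y v) {e0 : Sym2 V} (he0 : frac G y e0)
    (hv0 : v ∈ e0) :
    ∑ e ∈ Finset.univ.filter (fun e => frac G y e ∧ v ∈ e), y e = 1 := by
  set S := G.edgeFinset.filter (fun e => v ∈ e) with hSdef
  have he0S : e0 ∈ S := by
    rw [hSdef, Finset.mem_filter, SimpleGraph.mem_edgeFinset]
    exact ⟨he0.1, hv0⟩
  have hzero : ∀ e ∈ S, ¬ frac G y e → y e = 0 := by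
    intro e heS hnf
    rw [hSdef, Finset.mem_filter, SimpleGraph.mem_edgeFinset] at heS
    have h01 : y e ≤ 0 ∨ 1 ≤ y e := by
      by_contra hc
      push_neg at hc
      exact hnf ⟨heS.1, by linarith [hc.1, hc.2], by linarith [hc.1, hc.2]⟩
    rcases h01 with h | h
    · linarith [hy.2.1 e]
    · exfalso
      have hne : e0 ≠ e := by
        intro hq; rw [← hq] at h; linarith [he0.2.2]
      have hsub : ({e0, e} : Finset (Sym2 V)) ⊆ S := by
        intro f hf
        rcases Finset.mem_insert.mp hf with rfl | hf
        · exact he0S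
        · rw [Finset.mem_singleton.mp hf]
          rw [hSdef, Finset.mem_filter, SimpleGraph.mem_edgeFinset]
          exact ⟨heS.1, heS.2⟩
      have hpair : y e0 + y e ≤ ∑ f ∈ S, y f := by
        rw [← Finset.sum_pair hne]
        exact Finset.sum_le_sum_of_subset_of_nonneg hsub (fun f _ _ => hy.2.1 f)
      have := hv
      rw [tight] at this
      rw [hSdef] at hpair
      rw [this] at hpair
      linarith [he0.2.1]
  have hset : Finset.univ.filter (fun e => frac G y e ∧ v ∈ e)
      = S.filter (fun e => frac G y e) := by
    ext e
    simp only [Finset.mem_filter, Finset.mem_univ, true_and, hSdef,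
      SimpleGraph.mem_edgeFinset]
    constructor
    · rintro ⟨hf, hve⟩; exact ⟨⟨hf.1, hve⟩, hf⟩
    · rintro ⟨⟨_, hve⟩, hf⟩; exact ⟨hf, hve⟩
  rw [hset]
  have hsplit := Finset.sum_filter_add_sum_filter_not S (fun e => frac G y e) y
  have hnot : ∑ e ∈ S.filter (fun e => ¬ frac G y e), y e = 0 :=
    Finset.sum_eq_zero (fun e he => by
      rw [Finset.mem_filter] at he
      exact hzero e he.1 he.2)
  have htv := hv
  rw [tight] at htv
  rw [← hSdef] at htv
  linarith

include hy in
omit hext in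
lemma exists_other_edge {v : V} (hv : tight G y v) {e : Sym2 V} (he : frac G y e)
    (hve : v ∈ e) : ∃ e', frac G y e' ∧ v ∈ e' ∧ e' ≠ e := by
  by_contra hc
  push_neg at hc
  have hset : Finset.univ.filter (fun f => frac G y f ∧ v ∈ f) = {e} := by
    apply subset_antisymm
    · intro f hf
      rw [mem_fracInc] at hf
      rw [Finset.mem_singleton]
      exact hc f hf.1 hf.2
    · intro f hf
      rw [Finset.mem_singleton] at hf
      subst hf
      rw [mem_fracInc]
      exact ⟨he, hve⟩
  have := frac_sum_one hy hv he hve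
  rw [hset, Finset.sum_singleton] at this
  linarith [he.2.2]

open SimpleGraph Walk in
lemma touching_tight {u w : V} (h : (Hf G y).Adj u w) : tight G y u := by
  by_contra hu
  have key : ∀ n : ℕ, ∃ (x : V) (p : (Hf G y).Walk x u), p.IsTrail ∧ p.length = n + 1 := by
    intro n
    induction n with
    | zero =>
      refine ⟨w, Walk.cons h.symm Walk.nil, ?_, rfl⟩
      simp [Walk.isTrail_def]
    | succ n ih =>
      obtain ⟨x, p, hp, hlen⟩ := ih
      have hnn : ¬ p.Nil := Walk.not_nil_iff_lt_length.mpr (by omega)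
      obtain ⟨x1, h_arr, q, rfl⟩ := Walk.not_nil_iff.mp hnn
      have hfrac_arr : frac G y s(x, x1) := frac_of_adj h_arr
      by_cases hxt : tight G y x
      · obtain ⟨e', he'f, he'x, he'ne⟩ :=
          exists_other_edge hy hxt hfrac_arr (by simp)
        obtain ⟨z', h', heq⟩ := adj_of_frac he'f he'x
        subst heq
        by_cases hmem : s(x, z') ∈ (Walk.cons h_arr q).edges
        · -- the walk closes up : derive a contradiction
          exfalso
          have he'q : s(x, z') ∈ q.edges := by
            rw [Walk.edges_cons] at hmem
            rcases List.mem_cons.mp hmem with h1 | h1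
            · exact absurd h1 he'ne
            · exact h1
          have hxq : x ∈ q.support := q.fst_mem_support_of_mem_edges he'q
          set T := q.takeUntil x hxq with hT
          set P0 := q.dropUntil x hxq with hP0def
          have hspec : T.append P0 = q := q.take_spec hxq
          set C0 : (Hf G y).Walk x x := Walk.cons h_arr T with hC0def
          have hpeq : Walk.cons h_arr q = C0.append P0 := by
            rw [hC0def, ← hspec, Walk.cons_append]
          rw [hpeq] at hp
          obtain ⟨hC0t, hP0t, hdisj⟩ := trail_split hp
          rcases Nat.even_or_odd C0.length with hev | hodd
          · exact K1 hy hext C0 hC0t (by rw [hC0def]; simp [Walk.length_cons]) hev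
          · by_cases hP0len : P0.length = 0
            · exact absurd hxt ((Walk.eq_of_length_eq_zero hP0len) ▸ hu)
            · exact D1 hy hext hu P0 C0 hP0t hC0t (by omega) hodd
                (fun e he hC => hdisj e hC he)
        · refine ⟨z', Walk.cons h'.symm (Walk.cons h_arr q), ?_, ?_⟩
          · rw [Walk.isTrail_cons]
            refine ⟨hp, ?_⟩
            rwa [Sym2.eq_swap]
          · simp [Walk.length_cons, hlen]
      · exact (K2 hy hext (Walk.cons h_arr q) hp (by simp) hxt hu).elim
  obtain ⟨x, p, hp, hlen⟩ := key (Fintype.card (Sym2 V))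
  have hb := hp.edges_nodup.length_le_card
  rw [p.length_edges] at hb
  omega

/-- Every vertex incident to a fractional edge is tight. -/
lemma tight_of_frac {e : Sym2 V} (he : frac G y e) {v : V} (hv : v ∈ e) :
    tight G y v := by
  obtain ⟨w, hadj, _⟩ := adj_of_frac he hv
  exact touching_tight hy hext hadj

open SimpleGraph Walk in
/-- A vertex of an odd closed trail has no incident fractional edge outside the trail. -/
lemma closed_odd_trail_saturated {z : V} (C0 : (Hf G y).Walk z z) (hC0 : C0.IsTrail)
    (hodd : Odd C0.length) {f : Sym2 V} (hf : frac G y f) (hzf : z ∈ f)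
    (hfC : f ∉ C0.edges) : False := by
  obtain ⟨w0, hw0, heqf⟩ := adj_of_frac hf hzf
  have key : ∀ n : ℕ, ∃ (x : V) (q : (Hf G y).Walk x z), q.IsTrail ∧ q.length = n + 1 ∧
      (∀ e ∈ q.edges, e ∉ C0.edges) := by
    intro n
    induction n with
    | zero =>
      refine ⟨w0, Walk.cons hw0.symm Walk.nil, by simp [Walk.isTrail_def], rfl, ?_⟩
      intro e he
      simp only [Walk.edges_cons, Walk.edges_nil, List.mem_singleton] at he
      subst he
      rw [Sym2.eq_swap, ← heqf]
      exact hfC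
    | succ n ih =>
      obtain ⟨x, q, hq, hlen, hdisjC⟩ := ih
      have hnn : ¬ q.Nil := Walk.not_nil_iff_lt_length.mpr (by omega)
      obtain ⟨x1, h_arr, q', rfl⟩ := Walk.not_nil_iff.mp hnn
      have hxt : tight G y x := tight_of_frac hy hext (frac_of_adj h_arr) (by simp)
      obtain ⟨e', he'f, he'x, he'ne⟩ :=
        exists_other_edge hy hxt (frac_of_adj h_arr) (by simp)
      obtain ⟨z', h', heq⟩ := adj_of_frac he'f he'x
      subst heq
      by_cases hmem : s(x, z') ∈ (Walk.cons h_arr q').edges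
      · exfalso
        have he'q : s(x, z') ∈ q'.edges := by
          rw [Walk.edges_cons] at hmem
          rcases List.mem_cons.mp hmem with h1 | h1
          · exact absurd h1 he'ne
          · exact h1
        have hxq : x ∈ q'.support := q'.fst_mem_support_of_mem_edges he'q
        set T := q'.takeUntil x hxq with hT
        set P0 := q'.dropUntil x hxq with hP0def
        have hspec : T.append P0 = q' := q'.take_spec hxq
        set C1 : (Hf G y).Walk x x := Walk.cons h_arr T with hC1def
        have hpeq : Walk.cons h_arr q' = C1.append P0 := by
          rw [hC1def, ← hspec, Walk.cons_append]
        have hq2 := hq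
        rw [hpeq] at hq2
        obtain ⟨hC1t, hP0t, hdisj⟩ := trail_split hq2
        have hsubC1 : ∀ e ∈ C1.edges, e ∈ (Walk.cons h_arr q').edges := by
          intro e he; rw [hpeq, Walk.edges_append]; exact List.mem_append_left _ he
        have hsubP0 : ∀ e ∈ P0.edges, e ∈ (Walk.cons h_arr q').edges := by
          intro e he; rw [hpeq, Walk.edges_append]; exact List.mem_append_right _ he
        rcases Nat.even_or_odd C1.length with hev | hodd1
        · exact K1 hy hext C1 hC1t (by rw [hC1def]; simp [Walk.length_cons]) hev
        · exact D2 hy hext C0 P0 C1 hC0 hP0t hC1t hodd hodd1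
            (fun e heC0 heP0 => hdisjC e (hsubP0 e heP0) heC0)
            (fun e heC0 heC1 => hdisjC e (hsubC1 e heC1) heC0)
      · by_cases hmemC : s(x, z') ∈ C0.edges
        · exfalso
          have hxC : x ∈ C0.support := C0.fst_mem_support_of_mem_edges hmemC
          exact Theta hy hext C0 (Walk.cons h_arr q') hC0 hq hodd (by simp) hxC hdisjC
        · refine ⟨z', Walk.cons h'.symm (Walk.cons h_arr q'), ?_, by simp [hlen], ?_⟩
          · rw [Walk.isTrail_cons]
            refine ⟨hq, ?_⟩
            rwa [Sym2.eq_swap]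
          · intro e he
            rw [Walk.edges_cons] at he
            rcases List.mem_cons.mp he with h1 | h1
            · subst h1; rwa [Sym2.eq_swap]
            · exact hdisjC e h1
  obtain ⟨x, p, hp, hlen, _⟩ := key (Fintype.card (Sym2 V))
  have hb := hp.edges_nodup.length_le_card
  rw [p.length_edges] at hb
  omega

omit hy hext in
open SimpleGraph Walk in
lemma head_edge {a c b : V} (h : (Hf G y).Adj a c) (q : (Hf G y).Walk c b)
    (hp : (Walk.cons h q).IsPath) {e : Sym2 V} (he : e ∈ (Walk.cons h q).edges)
    (ha : a ∈ e) : e = s(a, c) := by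
  rw [Walk.edges_cons] at he
  rcases List.mem_cons.mp he with h1 | h1
  · exact h1
  · exfalso
    obtain ⟨d, rfl⟩ := Sym2.mem_iff_exists.mp ha
    have : a ∈ q.support := q.fst_mem_support_of_mem_edges h1
    exact ((Walk.cons_isPath_iff h q).mp hp).2 this

open SimpleGraph Walk in
/-- Every vertex incident to a fractional edge lies on an odd cycle of the
fractional graph. -/
lemma exists_odd_cycle {v w : V} (h : (Hf G y).Adj v w) :
    ∃ C : (Hf G y).Walk v v, C.IsCycle ∧ Odd C.length := by
  by_contra hno
  push_neg at hno
  have key : ∀ n : ℕ, ∃ (x : V) (p : (Hf G y).Walk x v), p.IsPath ∧ p.length = n + 1 := by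
    intro n
    induction n with
    | zero =>
      refine ⟨w, Walk.cons h.symm Walk.nil, ?_, rfl⟩
      rw [Walk.cons_isPath_iff]
      refine ⟨Walk.IsPath.nil, ?_⟩
      simp [h.ne']
    | succ n ih =>
      obtain ⟨x, p, hp, hlen⟩ := ih
      have hnn : ¬ p.Nil := Walk.not_nil_iff_lt_length.mpr (by omega)
      obtain ⟨x1, h_arr, q, rfl⟩ := Walk.not_nil_iff.mp hnn
      have hxt : tight G y x := tight_of_frac hy hext (frac_of_adj h_arr) (by simp)
      obtain ⟨e', he'f, he'x, he'ne⟩ :=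
        exists_other_edge hy hxt (frac_of_adj h_arr) (by simp)
      obtain ⟨z', h', heq⟩ := adj_of_frac he'f he'x
      subst heq
      have hmem : s(x, z') ∉ (Walk.cons h_arr q).edges := fun hm =>
        he'ne (head_edge h_arr q hp hm (by simp))
      by_cases hsup : z' ∈ (Walk.cons h_arr q).support
      · exfalso
        set p : (Hf G y).Walk x v := Walk.cons h_arr q with hpdef
        set T := p.takeUntil z' hsup with hT
        set P0 := p.dropUntil z' hsup with hP0def
        have hspec : T.append P0 = p := p.take_spec hsup
        set C1 : (Hf G y).Walk z' z' := Walk.cons h'.symm T with hC1def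
        have hC1cyc : C1.IsCycle := by
          rw [hC1def, Walk.cons_isCycle_iff]
          refine ⟨hp.takeUntil hsup, ?_⟩
          intro hmm
          rw [Sym2.eq_swap] at hmm
          exact hmem (p.edges_takeUntil_subset hsup hmm)
        have hC1t : C1.IsTrail := hC1cyc.isCircuit.isTrail
        have hC1pos : 0 < C1.length := by rw [hC1def]; simp [Walk.length_cons]
        rcases Nat.even_or_odd C1.length with hev | hodd1
        · exact K1 hy hext C1 hC1t hC1pos hev
        · by_cases hzv : z' = v
          · subst hzv
            exact hno C1 hC1cyc hodd1
          · have hP0nn : ¬ P0.Nil := by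
              rw [Walk.not_nil_iff_lt_length]
              rcases Nat.eq_zero_or_pos P0.length with h0 | h0
              · exact absurd (Walk.eq_of_length_eq_zero h0) hzv
              · exact h0
            obtain ⟨z2, h3, r, hP0eq⟩ := Walk.not_nil_iff.mp hP0nn
            have hfP0 : s(z', z2) ∈ P0.edges := by
              rw [hP0eq, Walk.edges_cons]; exact List.mem_cons_self
            have hfp : s(z', z2) ∈ p.edges := p.edges_dropUntil_subset hsup hfP0
            have hsplit := trail_split (p := T) (q := P0) (by
              rw [hspec]; exact hp.isTrail)
            have hfC1 : s(z', z2) ∉ C1.edges := by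
              rw [hC1def, Walk.edges_cons]
              intro hmm
              rcases List.mem_cons.mp hmm with h1 | h1
              · apply hmem
                rw [show (s(x, z') : Sym2 V) = s(z', x) from Sym2.eq_swap, ← h1]
                exact hfp
              · exact hsplit.2.2 _ h1 hfP0
            exact closed_odd_trail_saturated hy hext C1 hC1t hodd1
              (frac_of_adj h3) (by simp) hfC1
      · refine ⟨z', Walk.cons h'.symm (Walk.cons h_arr q), ?_, by simp [hlen]⟩
        rw [Walk.cons_isPath_iff]
        exact ⟨hp, hsup⟩
  obtain ⟨x, p, hp, hlen⟩ := key (Fintype.card V)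
  have := hp.length_lt
  omega

open SimpleGraph Walk in
lemma degree_two {v w : V} (h : (Hf G y).Adj v w) : (Hf G y).degree v = 2 := by
  have hvt : tight G y v := touching_tight hy hext h
  -- lower bound
  obtain ⟨e', he'f, he'v, he'ne⟩ := exists_other_edge hy hvt (frac_of_adj h) (by simp)
  obtain ⟨z2, h2, heq⟩ := adj_of_frac he'f he'v
  subst heq
  have hz2w : z2 ≠ w := by
    rintro rfl
    exact he'ne rfl
  have hlow : 2 ≤ (Hf G y).degree v := by
    rw [← SimpleGraph.card_neighborFinset_eq_degree]
    have hsub : ({w, z2} : Finset V) ⊆ (Hf G y).neighborFinset v := by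
      intro u hu
      rcases Finset.mem_insert.mp hu with rfl | hu
      · rwa [SimpleGraph.mem_neighborFinset]
      · rw [Finset.mem_singleton] at hu
        subst hu
        rwa [SimpleGraph.mem_neighborFinset]
    calc 2 = ({w, z2} : Finset V).card := by
          rw [Finset.card_insert_of_notMem (by simp [Ne.symm hz2w]), Finset.card_singleton]
      _ ≤ _ := Finset.card_le_card hsub
  -- upper bound
  obtain ⟨C, hCcyc, hCodd⟩ := exists_odd_cycle hy hext h
  have hCt : C.IsTrail := hCcyc.isCircuit.isTrail
  have hCnn : ¬ C.Nil := Walk.not_nil_iff_lt_length.mpr (by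
    have := hCcyc.three_le_length; omega)
  obtain ⟨c, h1, rest, rfl⟩ := Walk.not_nil_iff.mp hCnn
  have hrest : rest.IsPath ∧ s(v, c) ∉ rest.edges := (Walk.cons_isCycle_iff rest h1).mp hCcyc
  have hrnn : ¬ rest.reverse.Nil := by
    rw [Walk.not_nil_iff_lt_length, Walk.length_reverse]
    rcases Nat.eq_zero_or_pos rest.length with h0 | h0
    · exact absurd (Walk.eq_of_length_eq_zero h0) h1.ne'
    · exact h0
  obtain ⟨d, h2', r2, hrev⟩ := Walk.not_nil_iff.mp hrnn
  have hhigh : (Hf G y).degree v ≤ 2 := by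
    rw [← SimpleGraph.card_neighborFinset_eq_degree]
    have hsub : (Hf G y).neighborFinset v ⊆ ({c, d} : Finset V) := by
      intro u hu
      rw [SimpleGraph.mem_neighborFinset] at hu
      have hef : frac G y s(v, u) := frac_of_adj hu
      have hemem : s(v, u) ∈ (Walk.cons h1 rest).edges := by
        by_contra hnot
        exact closed_odd_trail_saturated hy hext _ hCt hCodd hef (by simp) hnot
      rw [Walk.edges_cons] at hemem
      rcases List.mem_cons.mp hemem with hcase | hcase
      · rw [Sym2.congr_right.mp hcase]
        exact Finset.mem_insert_self _ _
      · have hrevmem : s(v, u) ∈ rest.reverse.edges := by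
          rw [Walk.edges_reverse, List.mem_reverse]
          exact hcase
        rw [hrev] at hrevmem
        have hrevpath : (Walk.cons h2' r2).IsPath := by
          rw [← hrev]
          exact hrest.1.reverse
        have := head_edge h2' r2 hrevpath hrevmem (by simp)
        rw [Sym2.congr_right.mp this]
        exact Finset.mem_insert_of_mem (Finset.mem_singleton_self _)
    calc ((Hf G y).neighborFinset v).card ≤ ({c, d} : Finset V).card :=
          Finset.card_le_card hsub
      _ ≤ 2 := (Finset.card_insert_le _ _).trans (by simp)
  omega

/-- Every fractional edge has value `1/2`. -/
lemma frac_half {e0 : Sym2 V} (he0 : frac G y e0) : y e0 = 1 / 2 := by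
  set δ : Sym2 V → ℝ := fun e => if frac G y e then 1 - 2 * y e else 0 with hδ
  have hker : δ = 0 := by
    apply kernel hy hext
    · intro e hf
      rw [hδ]; simp [hf]
    · intro z hz
      have hterm : ∀ e : Sym2 V, (if z ∈ e then δ e else 0)
          = if (frac G y e ∧ z ∈ e) then 1 - 2 * y e else 0 := by
        intro e
        rw [hδ]
        by_cases h1 : z ∈ e <;> by_cases h2 : frac G y e <;> simp [h1, h2]
      rw [Finset.sum_congr rfl (fun e _ => hterm e), ← Finset.sum_filter]
      by_cases htouch : ∃ f, frac G y f ∧ z ∈ f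
      · obtain ⟨f, hff, hzf⟩ := htouch
        have hcard : (Finset.univ.filter (fun e => frac G y e ∧ z ∈ e)).card = 2 := by
          have himg : Finset.univ.filter (fun e => frac G y e ∧ z ∈ e)
              = ((Hf G y).neighborFinset z).image (fun u => s(z, u)) := by
            ext g
            rw [mem_fracInc, Finset.mem_image]
            constructor
            · rintro ⟨hg, hzg⟩
              obtain ⟨u, hu, rfl⟩ := adj_of_frac hg hzg
              exact ⟨u, SimpleGraph.mem_neighborFinset _ _ _ |>.mpr hu, rfl⟩
            · rintro ⟨u, hu, rfl⟩
              rw [SimpleGraph.mem_neighborFinset] at hu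
              exact ⟨frac_of_adj hu, by simp⟩
          rw [himg, Finset.card_image_of_injOn (fun a _ b _ hab => Sym2.congr_right.mp hab),
            SimpleGraph.card_neighborFinset_eq_degree]
          obtain ⟨u, hu, _⟩ := adj_of_frac hff hzf
          exact degree_two hy hext hu
        have hsum1 : ∑ e ∈ Finset.univ.filter (fun e => frac G y e ∧ z ∈ e), y e = 1 :=
          frac_sum_one hy hz hff hzf
        rw [Finset.sum_sub_distrib]
        rw [Finset.sum_const, hcard, ← Finset.mul_sum, hsum1]
        norm_num
      · apply Finset.sum_eq_zero
        intro e he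
        rw [Finset.mem_filter] at he
        exact absurd ⟨he.2.1, he.2.2⟩ (fun hx => htouch ⟨e, hx⟩)
  have hthis := congrFun hker e0
  rw [hδ] at hthis
  simp only [he0, if_pos, Pi.zero_apply] at hthis
  linarith

lemma graph_eq : SimpleGraph.fromEdgeSet {e | y e = 1 / 2} = Hf G y := by
  rw [Hf]
  congr 1
  ext e
  simp only [Set.mem_setOf_eq]
  constructor
  · intro he
    have hedge : e ∈ G.edgeSet := by
      by_contra hne
      rw [hy.1 e hne] at he
      norm_num at he
    exact ⟨hedge, by rw [he]; norm_num, by rw [he]; norm_num⟩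
  · intro hf
    exact frac_half hy hext hf

end Main

end FMAux

/-- Every extreme point of the fractional matching polytope of a finite
simple graph is half-integral; moreover, in the subgraph spanned by the edges of value `1/2`
every vertex has degree `0` or `2` and every vertex of degree `2` lies on an odd cycle, i.e.
every connected component of that subgraph is a cycle of odd length. -/
theorem fracMatchingPolytope_extremePoint_halfIntegral
    {V : Type*} [Fintype V] [DecidableEq V] (G : SimpleGraph V) (y : Sym2 V → ℝ)
    (hy : InFracMatchingPolytope G y)
    (hext : ∀ y' y'', InFracMatchingPolytope G y' → InFracMatchingPolytope G y'' →
      (∀ e, y e = (y' e + y'' e) / 2) → y' = y'') :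
    (∀ e, y e ∈ ({0, 1 / 2, 1} : Set ℝ)) ∧
      (∀ w : V, (SimpleGraph.fromEdgeSet {e | y e = 1 / 2}).degree w = 0 ∨
          (SimpleGraph.fromEdgeSet {e | y e = 1 / 2}).degree w = 2) ∧
      ∀ w : V, (SimpleGraph.fromEdgeSet {e | y e = 1 / 2}).degree w = 2 →
        ∃ C : (SimpleGraph.fromEdgeSet {e | y e = 1 / 2}).Walk w w,
          C.IsCycle ∧ Odd C.length := by
  have hEq : SimpleGraph.fromEdgeSet {e | y e = 1 / 2} = FMAux.Hf G y :=
    FMAux.graph_eq hy hext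
  have hkey : ∀ (H : SimpleGraph V) [∀ w, Fintype (H.neighborSet w)], H = FMAux.Hf G y →
      ∀ w, H.degree w = (FMAux.Hf G y).degree w := by
    intro H _ h w; subst h; congr; exact Subsingleton.elim _ _
  refine ⟨?_, ?_, ?_⟩
  · intro e
    simp only [Set.mem_insert_iff, Set.mem_singleton_iff]
    by_cases hedge : e ∈ G.edgeSet
    · by_cases hfr : FMAux.frac G y e
      · right; left
        exact FMAux.frac_half hy hext hfr
      · have h0 : 0 ≤ y e := hy.2.1 e
        have h1 : y e ≤ 1 := FMAux.y_le_one hy hedge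
        have h01 : y e ≤ 0 ∨ 1 ≤ y e := by
          by_contra hc
          push_neg at hc
          exact hfr ⟨hedge, hc.1, hc.2⟩
        rcases h01 with hc | hc
        · left; linarith
        · right; right; linarith
    · left
      exact hy.1 e hedge
  · intro w
    rw [hkey _ hEq w]
    by_cases htouch : ∃ u, (FMAux.Hf G y).Adj w u
    · right
      obtain ⟨u, hu⟩ := htouch
      exact FMAux.degree_two hy hext hu
    · left
      rw [← SimpleGraph.card_neighborFinset_eq_degree, Finset.card_eq_zero]
      apply Finset.eq_empty_iff_forall_notMem.mpr
      intro u hu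
      rw [SimpleGraph.mem_neighborFinset] at hu
      exact htouch ⟨u, hu⟩
  · intro w hdeg
    rw [hkey _ hEq w] at hdeg; rw [hEq]
    have hpos : 0 < ((FMAux.Hf G y).neighborFinset w).card := by
      rw [SimpleGraph.card_neighborFinset_eq_degree, hdeg]
      norm_num
    obtain ⟨u, hu⟩ := Finset.card_pos.mp hpos
    rw [SimpleGraph.mem_neighborFinset] at hu
    exact FMAux.exists_odd_cycle hy hext hu
end
end

section
/- Let P_1,…,P_n be pairwise edge-disjoint paths in a finite simple graph such that the union G = P_1 ∪ … ∪ P_n (the graph whose edge set is the union of the edge sets of the paths, with the induced vertex set) is a tree. Then {1,…,n} can be partitioned into two sets A and B such that every connected component of the graph ∪_{j∈A} P_j is a spider, and every connected component of the graph ∪_{j∈B} P_j is a spider. -/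
open scoped Classical

noncomputable section

private def colAux {α : Type*} (root : α → Prop) [DecidablePred root] (step : α → α) :
    ℕ → α → Bool
  | 0, _ => false
  | d+1, j => if root j then false else !(colAux root step d (step j))

private lemma colAux_congr {α : Type*} (root : α → Prop) [DecidablePred root] (step : α → α)
    (dep : α → ℕ) (hdec : ∀ j, ¬ root j → dep (step j) < dep j) :
    ∀ m j, dep j ≤ m → ∀ d₁ d₂, dep j < d₁ → dep j < d₂ →
      colAux root step d₁ j = colAux root step d₂ j := by
  intro m
  induction m with
  | zero =>
    intro j hj d₁ d₂ h1 h2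
    obtain ⟨e₁, rfl⟩ : ∃ e, d₁ = e + 1 := ⟨d₁ - 1, by omega⟩
    obtain ⟨e₂, rfl⟩ : ∃ e, d₂ = e + 1 := ⟨d₂ - 1, by omega⟩
    by_cases hr : root j
    · simp [colAux, hr]
    · exact absurd (hdec j hr) (by omega)
  | succ m ih =>
    intro j hj d₁ d₂ h1 h2
    obtain ⟨e₁, rfl⟩ : ∃ e, d₁ = e + 1 := ⟨d₁ - 1, by omega⟩
    obtain ⟨e₂, rfl⟩ : ∃ e, d₂ = e + 1 := ⟨d₂ - 1, by omega⟩
    by_cases hr : root j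
    · simp [colAux, hr]
    · have hd := hdec j hr
      simp only [colAux, if_neg hr]
      congr 1
      exact ih (step j) (by omega) e₁ e₂ (by omega) (by omega)

private lemma colAux_spec {α : Type*} (root : α → Prop) [DecidablePred root] (step : α → α)
    (dep : α → ℕ) (hdec : ∀ j, ¬ root j → dep (step j) < dep j) (j : α) (h : ¬ root j) :
    colAux root step (dep j + 1) j = !(colAux root step (dep (step j) + 1) (step j)) := by
  have hd := hdec j h
  simp only [colAux, if_neg h]
  congr 1
  exact colAux_congr root step dep hdec (dep (step j)) (step j) le_rfl (dep j)
    (dep (step j) + 1) (by omega) (by omega)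

private lemma path_start_card {V : Type*} [Fintype V] [DecidableEq V] {G : SimpleGraph V}
    {A B : V} (p : G.Walk A B) (hp : p.IsPath) :
    (Finset.univ.filter (fun x => s(A, x) ∈ p.edges)).card ≤ 1 := by
  induction p with
  | nil => simp
  | @cons A w B h q ih =>
    rw [SimpleGraph.Walk.cons_isPath_iff] at hp
    have : (Finset.univ.filter (fun x => s(A, x) ∈ (SimpleGraph.Walk.cons h q).edges)) = {w} := by
      ext x
      simp only [Finset.mem_filter, Finset.mem_univ, true_and, Finset.mem_singleton,
        SimpleGraph.Walk.edges_cons, List.mem_cons]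
      constructor
      · rintro (he | he)
        · rw [Sym2.eq_iff] at he
          rcases he with ⟨-, rfl⟩ | ⟨rfl, rfl⟩
          · rfl
          · exact absurd rfl h.ne
        · exact absurd (q.fst_mem_support_of_mem_edges he) hp.2
      · rintro rfl; exact Or.inl rfl
    rw [this]; simp

private lemma path_card_le_two {V : Type*} [Fintype V] [DecidableEq V] {G : SimpleGraph V}
    {A B : V} (p : G.Walk A B) (hp : p.IsPath) (v : V) :
    (Finset.univ.filter (fun x => s(v, x) ∈ p.edges)).card ≤ 2 := by
  induction p with
  | nil => simp
  | @cons A w B h q ih =>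
    have hp' := hp
    rw [SimpleGraph.Walk.cons_isPath_iff] at hp'
    by_cases hvA : v = A
    · subst hvA
      exact le_trans (path_start_card _ hp) (by norm_num)
    · by_cases hvw : v = w
      · subst hvw
        have hsub : (Finset.univ.filter (fun x => s(v, x) ∈ (SimpleGraph.Walk.cons h q).edges))
            ⊆ insert A (Finset.univ.filter (fun x => s(v, x) ∈ q.edges)) := by
          intro x hx
          simp only [Finset.mem_filter, Finset.mem_univ, true_and,
            SimpleGraph.Walk.edges_cons, List.mem_cons] at hx
          rcases hx with he | he
          · rw [Sym2.eq_iff] at he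
            rcases he with ⟨rfl, rfl⟩ | ⟨-, rfl⟩
            · exact absurd rfl h.ne
            · exact Finset.mem_insert_self _ _
          · exact Finset.mem_insert_of_mem (by simp [he])
        calc _ ≤ (insert A (Finset.univ.filter (fun x => s(v, x) ∈ q.edges))).card :=
              Finset.card_le_card hsub
          _ ≤ (Finset.univ.filter (fun x => s(v, x) ∈ q.edges)).card + 1 :=
              Finset.card_insert_le _ _
          _ ≤ 2 := by
              have := path_start_card q hp'.1
              omega
      · have heq : (Finset.univ.filter (fun x => s(v, x) ∈ (SimpleGraph.Walk.cons h q).edges))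
            = (Finset.univ.filter (fun x => s(v, x) ∈ q.edges)) := by
          ext x
          simp only [Finset.mem_filter, Finset.mem_univ, true_and,
            SimpleGraph.Walk.edges_cons, List.mem_cons]
          constructor
          · rintro (he | he)
            · rw [Sym2.eq_iff] at he
              rcases he with ⟨rfl, -⟩ | ⟨rfl, -⟩
              · exact absurd rfl hvA
              · exact absurd rfl hvw
            · exact he
          · exact fun he => Or.inr he
        rw [heq]
        exact ih hp'.1


/-- `s` is the (nonempty) edge set of a path of `G`. -/
def IsPathEdges {V : Type*} [DecidableEq V] (G : SimpleGraph V) (s : Finset (Sym2 V)) :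
    Prop :=
  ∃ (a b : V) (W : G.Walk a b), W.IsPath ∧ W.edges ≠ [] ∧ s = W.edges.toFinset

/-- Every connected component of `H` is a spider: `H` is a forest, and no two distinct
vertices of degree at least `3` lie in the same connected component. -/
def SpiderForest {V : Type*} [Fintype V] [DecidableEq V] (H : SimpleGraph V) : Prop :=
  H.IsAcyclic ∧ ∀ u w : V, 3 ≤ H.degree u → 3 ≤ H.degree w → H.Reachable u w → u = w

/-- If `P 1, …, P n` are pairwise edge-disjoint paths in a finite simple
graph whose union (with the induced vertex set) is a tree, then the index set can be split
into two parts such that, in each part, every connected component of the union of the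
corresponding paths is a spider. -/
theorem edge_disjoint_paths_tree_partition_into_spiders
    {V : Type*} [Fintype V] [DecidableEq V] (G₀ : SimpleGraph V) {n : ℕ}
    (P : Fin n → Finset (Sym2 V)) (hP : ∀ j, IsPathEdges G₀ (P j))
    (hdisj : ∀ j k, j ≠ k → Disjoint (P j) (P k))
    (hcover : ∀ w : V, ∃ j, ∃ e ∈ P j, w ∈ e)
    (htree : (SimpleGraph.fromEdgeSet (⋃ j, (P j : Set (Sym2 V)))).IsTree) :
    ∃ A : Finset (Fin n),
      SpiderForest (SimpleGraph.fromEdgeSet (⋃ j ∈ A, (P j : Set (Sym2 V)))) ∧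
      SpiderForest
        (SimpleGraph.fromEdgeSet (⋃ j ∈ (Aᶜ : Finset (Fin n)), (P j : Set (Sym2 V)))) := by
  classical
  set T := SimpleGraph.fromEdgeSet (⋃ j, (P j : Set (Sym2 V))) with hT
  have hVne : Nonempty V := htree.isConnected.nonempty
  choose a b W hWpath hWne hWeq using hP
  obtain ⟨j₀, -, -⟩ := hcover (Classical.arbitrary V)
  -- edges of the paths are edges of `T`
  have hedgeT : ∀ j, ∀ e ∈ (W j).edges, e ∈ T.edgeSet := by
    intro j e he
    rw [hT, SimpleGraph.edgeSet_fromEdgeSet]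
    refine ⟨Set.mem_iUnion.2 ⟨j, ?_⟩, ?_⟩
    · rw [Finset.mem_coe, hWeq j]
      exact List.mem_toFinset.2 he
    · exact SimpleGraph.not_isDiag_of_mem_edgeSet _ ((W j).edges_subset_edgeSet he)
  let TW : ∀ j, T.Walk (a j) (b j) := fun j => (W j).transfer T (hedgeT j)
  have hTWedges : ∀ j, (TW j).edges = (W j).edges :=
    fun j => SimpleGraph.Walk.edges_transfer _ _
  have hTWpath : ∀ j, (TW j).IsPath := fun j => (hWpath j).transfer _
  obtain ⟨r⟩ := hVne
  choose Q hQpath hQuniq using fun v => htree.existsUnique_path v r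
  set depth : V → ℕ := fun v => (Q v).length with hdepth
  have hdepth_r : depth r = 0 := by
    have h0 : (SimpleGraph.Walk.nil : T.Walk r r) = Q r :=
      hQuniq r _ SimpleGraph.Walk.IsPath.nil
    simp [hdepth, ← h0]
  have hdepth_zero : ∀ v, depth v = 0 → v = r :=
    fun v h => SimpleGraph.Walk.eq_of_length_eq_zero h
  -- parent data
  have hPdata : ∀ v, ∃ u, v ≠ r →
      T.Adj v u ∧ depth v = depth u + 1 ∧ ∀ w, T.Adj v w → depth v = depth w + 1 → w = u := by
    intro v
    by_cases hv : v = r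
    · exact ⟨v, fun h => absurd hv h⟩
    · obtain ⟨u, hadj, p', hcons⟩ := SimpleGraph.Walk.exists_eq_cons_of_ne hv (Q v)
      refine ⟨u, fun _ => ⟨hadj, ?_, ?_⟩⟩
      · have hp' : p'.IsPath := by
          have := hQpath v; rw [hcons] at this; exact this.of_cons
        have hpu : p' = Q u := hQuniq u p' hp'
        simp [hdepth, hcons, ← hpu]
      · intro w hadj2 hdw
        have hwnot : v ∉ (Q w).support := by
          intro hmem
          have hsplit := (Q w).take_spec hmem
          have hdrop : ((Q w).dropUntil v hmem) = Q v :=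
            hQuniq v _ ((hQpath w).dropUntil hmem)
          have hlen : (Q w).length
              = ((Q w).takeUntil v hmem).length + ((Q w).dropUntil v hmem).length := by
            conv_lhs => rw [← hsplit]
            exact SimpleGraph.Walk.length_append _ _
          rw [hdrop] at hlen
          simp only [hdepth] at hdw
          omega
        have hpath2 : (SimpleGraph.Walk.cons hadj2 (Q w)).IsPath := (hQpath w).cons hwnot
        have heq2 := hQuniq v _ hpath2
        rw [hcons] at heq2
        have hsupp := congrArg SimpleGraph.Walk.support heq2
        rw [SimpleGraph.Walk.support_cons, SimpleGraph.Walk.support_cons] at hsupp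
        have htails : (Q w).support = p'.support := by
          injection hsupp
        rw [(Q w).support_eq_cons, p'.support_eq_cons] at htails
        injection htails with h1 h2
  choose par hpar using hPdata
  -- depth changes by exactly one along edges
  have hD3 : ∀ v w, T.Adj v w → depth w = depth v + 1 ∨ depth v = depth w + 1 := by
    intro v w hadj
    by_cases hm : v ∈ (Q w).support
    · left
      have hsplit := (Q w).take_spec hm
      have hdrop : ((Q w).dropUntil v hm) = Q v := hQuniq v _ ((hQpath w).dropUntil hm)
      have hsingle : (SimpleGraph.Walk.cons hadj.symm SimpleGraph.Walk.nil : T.Walk w v).IsPath := by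
        rw [SimpleGraph.Walk.cons_isPath_iff]
        exact ⟨SimpleGraph.Walk.IsPath.nil, by simp [hadj.ne']⟩
      have htake : ((Q w).takeUntil v hm)
          = SimpleGraph.Walk.cons hadj.symm SimpleGraph.Walk.nil :=
        (htree.existsUnique_path w v).unique ((hQpath w).takeUntil hm) hsingle
      have hlen : (Q w).length
          = ((Q w).takeUntil v hm).length + ((Q w).dropUntil v hm).length := by
        conv_lhs => rw [← hsplit]
        exact SimpleGraph.Walk.length_append _ _
      rw [hdrop, htake] at hlen
      simp only [hdepth]
      simp at hlen
      omega
    · right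
      have hpath2 : (SimpleGraph.Walk.cons hadj (Q w)).IsPath := (hQpath w).cons hm
      have heq2 := hQuniq v _ hpath2
      simp only [hdepth, ← heq2, SimpleGraph.Walk.length_cons]
  -- walks avoiding the parent edge go strictly down
  have hL2 : ∀ (u v : V) (p : T.Walk v u), p.IsPath → v ≠ r → s(v, par v) ∉ p.edges →
      depth u = depth v + p.length := by
    intro u v p
    induction p with
    | nil => intro _ _ _; simp
    | @cons v w u hadj q ih =>
      intro hpath hv hpe
      have hwne : w ≠ par v := by
        rintro rfl
        exact hpe (by rw [SimpleGraph.Walk.edges_cons]; exact List.mem_cons_self)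
      have hdw : depth w = depth v + 1 := by
        rcases hD3 v w hadj with h | h
        · exact h
        · exact absurd ((hpar v hv).2.2 w hadj h) hwne
      have hwr : w ≠ r := by
        intro h; rw [h, hdepth_r] at hdw; omega
      have hparw : par w = v :=
        ((hpar w hwr).2.2 v hadj.symm (by omega)).symm
      have hpe2 : s(w, par w) ∉ q.edges := by
        rw [hparw, Sym2.eq_swap]
        have hnodup := hpath.edges_nodup
        rw [SimpleGraph.Walk.edges_cons, List.nodup_cons] at hnodup
        exact hnodup.1
      have := ih hpath.of_cons hwr hpe2
      rw [SimpleGraph.Walk.length_cons]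
      omega
  have hL2s : ∀ (u v : V) (p : T.Walk v u), p.IsPath → v ≠ r → s(v, par v) ∉ p.edges →
      ∀ x ∈ p.support, x = v ∨ depth v < depth x := by
    intro u v p hpath hv hpe x hx
    have htake : ((p.takeUntil x hx)).IsPath := hpath.takeUntil hx
    have hpe' : s(v, par v) ∉ (p.takeUntil x hx).edges :=
      fun h => hpe (p.edges_takeUntil_subset hx h)
    have hlen := hL2 x v _ htake hv hpe'
    by_cases h0 : (p.takeUntil x hx).length = 0
    · left; exact (SimpleGraph.Walk.eq_of_length_eq_zero h0).symm
    · right; omega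
  -- tops of the paths
  have hts : ∀ j, ∃ tj ∈ (TW j).support.toFinset,
      ∀ v ∈ (TW j).support.toFinset, depth tj ≤ depth v :=
    fun j => Finset.exists_min_image _ depth
      ⟨a j, List.mem_toFinset.2 ((TW j).start_mem_support)⟩
  choose t ht1 ht2 using hts
  have ht1' : ∀ j, t j ∈ (TW j).support := fun j => List.mem_toFinset.1 (ht1 j)
  have ht2' : ∀ j v, v ∈ (TW j).support → depth (t j) ≤ depth v :=
    fun j v hv => ht2 j v (List.mem_toFinset.2 hv)
  have htop : ∀ j v, v ∈ (TW j).support → v ≠ r → s(v, par v) ∉ (TW j).edges → v = t j := by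
    intro j v hv hvr hpe
    by_contra hne
    have hsplit := (TW j).take_spec hv
    have htj : t j ∈ ((TW j).takeUntil v hv).support ∨ t j ∈ ((TW j).dropUntil v hv).support := by
      rw [← SimpleGraph.Walk.mem_support_append_iff, hsplit]
      exact ht1' j
    rcases htj with h | h
    · have hrev : ((TW j).takeUntil v hv).reverse.IsPath := ((hTWpath j).takeUntil hv).reverse
      have hpe' : s(v, par v) ∉ ((TW j).takeUntil v hv).reverse.edges := by
        rw [SimpleGraph.Walk.edges_reverse]
        intro hh
        exact hpe ((TW j).edges_takeUntil_subset hv (List.mem_reverse.1 hh))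
      have hmem : t j ∈ ((TW j).takeUntil v hv).reverse.support := by
        rw [SimpleGraph.Walk.support_reverse]; exact List.mem_reverse.2 h
      rcases hL2s _ v _ hrev hvr hpe' (t j) hmem with h' | h'
      · exact hne h'.symm
      · exact absurd (ht2' j v hv) (by omega)
    · have hdrop : ((TW j).dropUntil v hv).IsPath := (hTWpath j).dropUntil hv
      have hpe' : s(v, par v) ∉ ((TW j).dropUntil v hv).edges :=
        fun hh => hpe ((TW j).edges_dropUntil_subset hv hh)
      rcases hL2s _ v _ hdrop hvr hpe' (t j) h with h' | h'
      · exact hne h'.symm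
      · exact absurd (ht2' j v hv) (by omega)
  -- owner of the parent edge
  have hfex : ∀ v, ∃ j, v ≠ r → s(v, par v) ∈ (W j).edges := by
    intro v
    by_cases hv : v = r
    · exact ⟨j₀, fun h => absurd hv h⟩
    · have hadj : s(v, par v) ∈ T.edgeSet := (hpar v hv).1
      rw [hT, SimpleGraph.edgeSet_fromEdgeSet] at hadj
      obtain ⟨j, hmem⟩ := Set.mem_iUnion.1 hadj.1
      refine ⟨j, fun _ => ?_⟩
      rw [Finset.mem_coe, hWeq j] at hmem
      exact List.mem_toFinset.1 hmem
  choose f hf using hfex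
  have howner : ∀ v, v ≠ r → ∀ j, s(v, par v) ∈ (W j).edges → j = f v := by
    intro v hv j hj
    by_contra hne
    exact Finset.disjoint_left.1 (hdisj j (f v) hne)
      (by rw [hWeq]; exact List.mem_toFinset.2 hj)
      (by rw [hWeq]; exact List.mem_toFinset.2 (hf v hv))
  -- the coloring
  have hdec : ∀ j, ¬ (t j = r) → depth (t (f (t j))) < depth (t j) := by
    intro j hj
    have hmem : s(t j, par (t j)) ∈ (W (f (t j))).edges := hf (t j) hj
    have hsup : par (t j) ∈ (TW (f (t j))).support := by
      apply SimpleGraph.Walk.snd_mem_support_of_mem_edges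
      rw [hTWedges]; exact hmem
    have h1 := ht2' (f (t j)) _ hsup
    have h2 := (hpar (t j) hj).2.1
    omega
  set col : Fin n → Bool :=
    fun j => colAux (fun i => t i = r) (fun i => f (t i)) (depth (t j) + 1) j with hcoldef
  have hcol : ∀ j, t j ≠ r → col j = !(col (f (t j))) :=
    fun j hj => colAux_spec (fun i => t i = r) (fun i => f (t i))
      (fun i => depth (t i)) hdec j hj
  -- the main step
  have main : ∀ S : Finset (Fin n),
      (∀ j ∈ S, ∀ k ∈ S, t j ≠ r → s(t j, par (t j)) ∉ (W k).edges) →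
      SpiderForest (SimpleGraph.fromEdgeSet (⋃ j ∈ S, (P j : Set (Sym2 V)))) := by
    intro S hS
    set H := SimpleGraph.fromEdgeSet (⋃ j ∈ S, (P j : Set (Sym2 V))) with hH
    have hHT : H ≤ T := by
      rw [hH, hT]
      apply SimpleGraph.fromEdgeSet_mono
      exact Set.iUnion₂_subset fun j _ => Set.subset_iUnion (fun j => (P j : Set (Sym2 V))) j
    constructor
    · intro v c hc
      exact htree.IsAcyclic (c.mapLe hHT) (hc.mapLe hHT)
    · intro u w hu hw hreach
      by_contra hne
      have key : ∀ v, 3 ≤ H.degree v → v ≠ r → s(v, par v) ∉ H.edgeSet := by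
        intro v hdeg hv hmem
        rw [hH, SimpleGraph.edgeSet_fromEdgeSet] at hmem
        obtain ⟨k, hkS, hpek⟩ := Set.mem_iUnion₂.1 hmem.1
        have hpekl : s(v, par v) ∈ (W k).edges := by
          rw [Finset.mem_coe, hWeq k] at hpek
          exact List.mem_toFinset.1 hpek
        have hnb : ∀ x, H.Adj v x → s(v, x) ∈ (W k).edges := by
          intro x hx
          rw [hH, SimpleGraph.fromEdgeSet_adj] at hx
          obtain ⟨j, hjS, hmj⟩ := Set.mem_iUnion₂.1 hx.1
          have hmjl : s(v, x) ∈ (W j).edges := by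
            rw [Finset.mem_coe, hWeq j] at hmj
            exact List.mem_toFinset.1 hmj
          by_cases hj : s(v, par v) ∈ (W j).edges
          · have h1 : j = f v := howner v hv j hj
            have h2 : k = f v := howner v hv k hpekl
            rw [h1, ← h2] at hmjl
            exact hmjl
          · have hvsupp : v ∈ (TW j).support := by
              apply SimpleGraph.Walk.fst_mem_support_of_mem_edges
              rw [hTWedges]; exact hmjl
            have hvt : v = t j := htop j v hvsupp hv (by rw [hTWedges]; exact hj)
            exact absurd (hvt ▸ hpekl) (hS j hjS k hkS (hvt ▸ hv))
        have hsub : H.neighborFinset v ⊆ Finset.univ.filter (fun x => s(v, x) ∈ (W k).edges) := by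
          intro x hx
          simp only [Finset.mem_filter, Finset.mem_univ, true_and]
          exact hnb x ((SimpleGraph.mem_neighborFinset H v x).1 hx)
        have hcard := Finset.card_le_card hsub
        have h2 := path_card_le_two (W k) (hWpath k) v
        rw [← SimpleGraph.card_neighborFinset_eq_degree] at hdeg
        omega
      obtain ⟨p0⟩ := hreach
      have hp : p0.bypass.IsPath := SimpleGraph.Walk.bypass_isPath p0
      set p := p0.bypass with hpdef
      have hpedges : ∀ e ∈ p.edges, e ∈ T.edgeSet :=
        fun e he => SimpleGraph.edgeSet_mono hHT (p.edges_subset_edgeSet he)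
      set pT := p.transfer T hpedges with hpTdef
      have hpT : pT.IsPath := hp.transfer _
      have hlenpos : 0 < pT.length := by
        rcases Nat.eq_zero_or_pos pT.length with h | h
        · exact absurd (SimpleGraph.Walk.eq_of_length_eq_zero h) hne
        · exact h
      have hu_side : u ≠ r → depth u < depth w := by
        intro hur
        have hpe : s(u, par u) ∉ pT.edges := by
          intro he
          rw [hpTdef, SimpleGraph.Walk.edges_transfer] at he
          exact key u (by convert hu) hur (p.edges_subset_edgeSet he)
        have := hL2 w u pT hpT hur hpe
        omega
      have hw_side : w ≠ r → depth w < depth u := by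
        intro hwr
        have hpe : s(w, par w) ∉ pT.reverse.edges := by
          intro he
          rw [SimpleGraph.Walk.edges_reverse] at he
          have he' := List.mem_reverse.1 he
          rw [hpTdef, SimpleGraph.Walk.edges_transfer] at he'
          exact key w (by convert hw) hwr (p.edges_subset_edgeSet he')
        have := hL2 u w pT.reverse hpT.reverse hwr hpe
        rw [SimpleGraph.Walk.length_reverse] at this
        omega
      by_cases hur : u = r
      · by_cases hwr : w = r
        · exact hne (hur.trans hwr.symm)
        · have := hw_side hwr
          rw [hur, hdepth_r] at this
          omega
      · by_cases hwr : w = r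
        · have := hu_side hur
          rw [hwr, hdepth_r] at this
          omega
        · have h1 := hu_side hur
          have h2 := hw_side hwr
          omega
  -- conclusion
  have hScol : ∀ c : Bool, ∀ j ∈ Finset.univ.filter (fun j => col j = c),
      ∀ k ∈ Finset.univ.filter (fun j => col j = c),
      t j ≠ r → s(t j, par (t j)) ∉ (W k).edges := by
    intro c j hj k hk htj hmem
    have hk' : k = f (t j) := howner (t j) htj k hmem
    have hstep := hcol j htj
    rw [← hk'] at hstep
    simp only [Finset.mem_filter] at hj hk
    rw [hj.2, hk.2] at hstep
    simp at hstep
  refine ⟨Finset.univ.filter (fun j => col j = false), main _ (hScol false), ?_⟩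
  have hAc : (Finset.univ.filter (fun j => col j = false))ᶜ
      = Finset.univ.filter (fun j => col j = true) := by
    ext j
    simp [Finset.mem_compl, Finset.mem_filter]
  rw [hAc]
  exact main _ (hScol true)
end
end
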